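/- arXiv:1512.01069 — 4 statements merged into one kernel-verified Lean document; each statement's English description precedes it below -/
import Mathlib

section
/- Let (p_k)_{k≥1} be a nonincreasing sequence in [0,1], let θ ∈ (0,1] and C > 0. If lim_{n→∞} n^{−θ} Σ_{k=1}^n p_k = C, then lim_{n→∞} n^{1−θ} p_n = θ C. -/
open Filter Finset Real

private lemma taub_aux (p : ℕ → ℝ) (θ C : ℝ)
    (hlim : Filter.Tendsto (fun n : ℕ => (n : ℝ) ^ (-θ) * ∑ k ∈ Finset.Icc 1 n, p k)
      Filter.atTop (nhds C))
    (m : ℕ → ℕ) (c : ℝ) (hc0 : 0 < c) (hc1 : c ≠ 1)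
    (hm : Tendsto (fun n : ℕ => ((m n : ℝ)) / (n : ℝ)) atTop (nhds c))
    (hm' : Tendsto m atTop atTop) :
    Tendsto (fun n : ℕ => (n : ℝ) ^ (1 - θ) *
        (((∑ k ∈ Finset.Icc 1 (m n), p k) - ∑ k ∈ Finset.Icc 1 n, p k) / ((m n : ℝ) - (n : ℝ))))
      atTop (nhds (C * (c ^ θ - 1) / (c - 1))) := by
  set S : ℕ → ℝ := fun n => ∑ k ∈ Finset.Icc 1 n, p k with hS
  set f : ℕ → ℝ := fun n => (n : ℝ) ^ (-θ) * S n with hf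
  have h1 : Tendsto (fun n => f (m n)) atTop (nhds C) := hlim.comp hm'
  have h2 : Tendsto (fun n : ℕ => ((m n : ℝ) / n) ^ θ) atTop (nhds (c ^ θ)) :=
    hm.rpow tendsto_const_nhds (Or.inl hc0.ne')
  have h3 : Tendsto (fun n : ℕ => (f (m n) * ((m n : ℝ) / n) ^ θ - f n) / ((m n : ℝ) / n - 1))
      atTop (nhds ((C * c ^ θ - C) / (c - 1))) :=
    ((h1.mul h2).sub hlim).div (hm.sub tendsto_const_nhds) (sub_ne_zero.2 hc1)
  have hlimval : (C * c ^ θ - C) / (c - 1) = C * (c ^ θ - 1) / (c - 1) := by ring_nf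
  rw [hlimval] at h3
  refine h3.congr' ?_
  have hev : ∀ᶠ n : ℕ in atTop, 1 ≤ n ∧ 1 ≤ m n :=
    (eventually_ge_atTop 1).and (hm'.eventually_ge_atTop 1)
  filter_upwards [hev] with n ⟨hn, hmn⟩
  have hx : (0 : ℝ) < n := by exact_mod_cast hn
  have hy : (0 : ℝ) < m n := by exact_mod_cast hmn
  have ha : (0 : ℝ) < (n : ℝ) ^ θ := Real.rpow_pos_of_pos hx θ
  have hb : (0 : ℝ) < (m n : ℝ) ^ θ := Real.rpow_pos_of_pos hy θ
  have e1 : ((m n : ℝ) / n) ^ θ = (m n : ℝ) ^ θ / (n : ℝ) ^ θ :=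
    Real.div_rpow hy.le hx.le θ
  have e2 : (m n : ℝ) ^ (-θ) = ((m n : ℝ) ^ θ)⁻¹ := Real.rpow_neg hy.le θ
  have e3 : (n : ℝ) ^ (-θ) = ((n : ℝ) ^ θ)⁻¹ := Real.rpow_neg hx.le θ
  have e4 : (n : ℝ) ^ (1 - θ) = (n : ℝ) / (n : ℝ) ^ θ := by
    rw [show (1 : ℝ) - θ = 1 + (-θ) by ring, Real.rpow_add hx, Real.rpow_one, e3,
      div_eq_mul_inv]
  simp only [hf, e1, e2, e3, e4]
  rcases eq_or_ne ((m n : ℝ)) (n : ℝ) with h | h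
  · have hmn' : m n = n := Nat.cast_injective h
    rw [hmn']
    simp [div_self ha.ne', sub_self]
  · have hne : (m n : ℝ) - n ≠ 0 := sub_ne_zero.2 h
    have hne2 : (m n : ℝ) / n - 1 ≠ 0 := by
      rw [div_sub_one hx.ne', div_ne_zero_iff]
      exact ⟨hne, hx.ne'⟩
    field_simp
    ring


/-- Tauberian lemma for nonincreasing sequences: if `(p k)` is nonincreasing in `[0,1]`
(for `k ≥ 1`), `θ ∈ (0,1]`, `C > 0` and `n^{−θ} ∑_{k=1}^n p k → C`, then
`n^{1−θ} p n → θ C`. -/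
theorem tauberian_nonincreasing (p : ℕ → ℝ)
    (hp0 : ∀ k : ℕ, 1 ≤ k → 0 ≤ p k) (hp1 : ∀ k : ℕ, 1 ≤ k → p k ≤ 1)
    (hmono : ∀ k : ℕ, 1 ≤ k → p (k + 1) ≤ p k)
    (θ C : ℝ) (hθ0 : 0 < θ) (hθ1 : θ ≤ 1) (hC : 0 < C)
    (hlim : Filter.Tendsto (fun n : ℕ => (n : ℝ) ^ (-θ) * ∑ k ∈ Finset.Icc 1 n, p k)
      Filter.atTop (nhds C)) :
    Filter.Tendsto (fun n : ℕ => (n : ℝ) ^ (1 - θ) * p n) Filter.atTop (nhds (θ * C)) := by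
  have hanti : ∀ i j : ℕ, 1 ≤ i → i ≤ j → p j ≤ p i := by
    intro i j hi hij
    induction j, hij using Nat.le_induction with
    | base => exact le_refl _
    | succ k hk ih => exact le_trans (hmono k (le_trans hi hk)) ih
  set S : ℕ → ℝ := fun n => ∑ k ∈ Finset.Icc 1 n, p k with hS
  have hIoc : ∀ n : ℕ, S n = ∑ k ∈ Finset.Ioc 0 n, p k := by
    intro n
    simp only [hS]
    congr 1
  have hdiff : ∀ a b : ℕ, a ≤ b → S b - S a = ∑ k ∈ Finset.Ioc a b, p k := by
    intro a b hab
    rw [hIoc a, hIoc b, ← Finset.sum_Ioc_consecutive _ (Nat.zero_le a) hab]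
    ring
  have hlow : ∀ a b : ℕ, a < b → ((b : ℝ) - a) * p b ≤ S b - S a := by
    intro a b hab
    rw [hdiff a b hab.le]
    have h1 : ∀ k ∈ Finset.Ioc a b, p b ≤ p k := by
      intro k hk
      rw [Finset.mem_Ioc] at hk
      exact hanti k b (lt_of_le_of_lt (Nat.zero_le a) hk.1) hk.2
    have h2 := Finset.card_nsmul_le_sum (Finset.Ioc a b) p (p b) h1
    rwa [Nat.card_Ioc, nsmul_eq_mul, Nat.cast_sub hab.le] at h2
  have hupp : ∀ a b : ℕ, a < b → S b - S a ≤ ((b : ℝ) - a) * p (a + 1) := by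
    intro a b hab
    rw [hdiff a b hab.le]
    have h1 : ∀ k ∈ Finset.Ioc a b, p k ≤ p (a + 1) := by
      intro k hk
      rw [Finset.mem_Ioc] at hk
      exact hanti (a + 1) k (Nat.succ_le_succ (Nat.zero_le a)) hk.1
    have h2 := Finset.sum_le_card_nsmul (Finset.Ioc a b) p (p (a + 1)) h1
    rwa [Nat.card_Ioc, nsmul_eq_mul, Nat.cast_sub hab.le] at h2
  -- slope of (1+x)^θ at 0 tends to θ
  have hd1 : HasDerivAt (fun y : ℝ => y ^ θ) θ 1 := by
    have h := Real.hasDerivAt_rpow_const (x := (1 : ℝ)) (p := θ) (Or.inl one_ne_zero)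
    simpa using h
  have hd : HasDerivAt (fun x : ℝ => (1 + x) ^ θ) θ 0 := by
    have h2 : HasDerivAt (fun x : ℝ => 1 + x) 1 0 := (hasDerivAt_id 0).const_add 1
    have h3 := HasDerivAt.comp (0 : ℝ) (by simpa using hd1) h2
    simpa [Function.comp_def] using h3
  have hs0 := hasDerivAt_iff_tendsto_slope.1 hd
  have hslope : Tendsto (fun x : ℝ => C * (((1 + x) ^ θ - 1) / x))
      (nhdsWithin 0 {(0 : ℝ)}ᶜ) (nhds (C * θ)) := by
    refine (hs0.const_mul C).congr fun x => ?_
    congr 1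
    rw [slope_def_field]
    simp [Real.one_rpow]
  rw [show θ * C = C * θ by ring, tendsto_order]
  constructor
  · -- lower bound
    intro a ha
    have hsub : (Set.Ioi (0 : ℝ)) ⊆ {(0 : ℝ)}ᶜ := fun y hy => ne_of_gt hy
    have hs1 := hslope.mono_left (nhdsWithin_mono 0 hsub)
    obtain ⟨x, hax, hx0⟩ :=
      ((hs1.eventually (eventually_gt_nhds ha)).and eventually_mem_nhdsWithin).exists
    rw [Set.mem_Ioi] at hx0
    set c : ℝ := 1 + x with hc
    have hc0 : (0 : ℝ) < c := by simp only [hc]; linarith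
    have hc1 : c ≠ 1 := by intro h; rw [hc] at h; linarith
    set m : ℕ → ℕ := fun n => ⌈c * (n : ℝ)⌉₊ with hmdef
    have hm : Tendsto (fun n : ℕ => ((m n : ℝ)) / (n : ℝ)) atTop (nhds c) :=
      (tendsto_nat_ceil_mul_div_atTop hc0.le).comp tendsto_natCast_atTop_atTop
    have hm' : Tendsto m atTop atTop :=
      tendsto_nat_ceil_atTop.comp (Tendsto.const_mul_atTop hc0 tendsto_natCast_atTop_atTop)
    have hB := taub_aux p θ C hlim m c hc0 hc1 hm hm'
    have hval : C * (c ^ θ - 1) / (c - 1) = C * (((1 + x) ^ θ - 1) / x) := by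
      rw [hc]
      rw [show (1 : ℝ) + x - 1 = x by ring, mul_div_assoc]
    rw [hval] at hB
    filter_upwards [hB.eventually (eventually_gt_nhds hax), eventually_ge_atTop 1]
      with n hBn hn
    refine lt_of_lt_of_le hBn ?_
    have hxn : (0 : ℝ) < n := by exact_mod_cast hn
    have hlt : n < m n := by
      rw [hmdef]
      refine Nat.lt_ceil.2 ?_
      nlinarith
    have hden : (0 : ℝ) < (m n : ℝ) - n := by
      have : (n : ℝ) < m n := by exact_mod_cast hlt
      linarith
    have hp : (S (m n) - S n) / ((m n : ℝ) - n) ≤ p n := by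
      rw [div_le_iff₀ hden]
      calc S (m n) - S n ≤ ((m n : ℝ) - n) * p (n + 1) := hupp n (m n) hlt
        _ ≤ ((m n : ℝ) - n) * p n := by
            exact mul_le_mul_of_nonneg_left (hmono n hn) hden.le
        _ = p n * ((m n : ℝ) - n) := by ring
    exact mul_le_mul_of_nonneg_left hp (Real.rpow_nonneg hxn.le _)
  · -- upper bound
    intro b hb
    have hsub : (Set.Iio (0 : ℝ)) ⊆ {(0 : ℝ)}ᶜ := fun y hy => ne_of_lt hy
    have hs1 := hslope.mono_left (nhdsWithin_mono 0 hsub)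
    have hIoo : ∀ᶠ x : ℝ in nhdsWithin 0 (Set.Iio 0), x ∈ Set.Ioo (-1 : ℝ) 0 :=
      eventually_of_mem (Ioo_mem_nhdsLT_of_mem (by norm_num)) fun x hx => hx
    obtain ⟨x, hbx, hx1, hx0⟩ :=
      ((hs1.eventually (eventually_lt_nhds hb)).and hIoo).exists
    set c : ℝ := 1 + x with hc
    have hc0 : (0 : ℝ) < c := by simp only [hc]; linarith
    have hc1 : c ≠ 1 := by intro h; rw [hc] at h; linarith
    set m : ℕ → ℕ := fun n => ⌊c * (n : ℝ)⌋₊ with hmdef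
    have hm : Tendsto (fun n : ℕ => ((m n : ℝ)) / (n : ℝ)) atTop (nhds c) :=
      (tendsto_nat_floor_mul_div_atTop hc0.le).comp tendsto_natCast_atTop_atTop
    have hm' : Tendsto m atTop atTop := tendsto_nat_floor_mul_atTop c hc0
    have hA := taub_aux p θ C hlim m c hc0 hc1 hm hm'
    have hval : C * (c ^ θ - 1) / (c - 1) = C * (((1 + x) ^ θ - 1) / x) := by
      rw [hc]
      rw [show (1 : ℝ) + x - 1 = x by ring, mul_div_assoc]
    rw [hval] at hA
    have hmlt : ∀ᶠ n : ℕ in atTop, (m n : ℝ) / n < 1 :=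
      hm.eventually (eventually_lt_nhds (by simp only [hc]; linarith))
    filter_upwards [hA.eventually (eventually_lt_nhds hbx), hmlt,
      hm'.eventually_ge_atTop 1, eventually_ge_atTop 1] with n hAn hr hm1 hn
    refine lt_of_le_of_lt ?_ hAn
    have hxn : (0 : ℝ) < n := by exact_mod_cast hn
    have hlt : m n < n := by
      have : (m n : ℝ) < n := by
        have := (div_lt_one hxn).1 hr
        exact this
      exact_mod_cast this
    have hden : (0 : ℝ) < (n : ℝ) - m n := by
      have : (m n : ℝ) < n := by exact_mod_cast hlt
      linarith
    have hp : p n ≤ (S (m n) - S n) / ((m n : ℝ) - n) := by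
      have h1 : p n ≤ (S n - S (m n)) / ((n : ℝ) - m n) := by
        rw [le_div_iff₀ hden]
        calc p n * ((n : ℝ) - m n) = ((n : ℝ) - m n) * p n := by ring
          _ ≤ S n - S (m n) := hlow (m n) n hlt
      rw [show S (m n) - S n = -(S n - S (m n)) by ring,
        show (m n : ℝ) - n = -((n : ℝ) - m n) by ring, neg_div_neg_eq]
      exact h1
    exact mul_le_mul_of_nonneg_left hp (Real.rpow_nonneg hxn.le _)
end

section
/- Let (p_k)_{k≥1} be a nonincreasing sequence in [0,1] and θ ∈ (0,1]. Set C₋ := liminf_{n→∞} n^{−θ} Σ_{k=1}^n p_k and C₊ := limsup_{n→∞} n^{−θ} Σ_{k=1}^n p_k, and assume C₊ < ∞. Then for every real y > 1, liminf_{n→∞} n^{1−θ} p_n ≥ (y^θ C₋ − C₊)/(y − 1), and for every real x ∈ (0,1), limsup_{n→∞} n^{1−θ} p_n ≤ (C₊ − x^θ C₋)/(1 − x). In particular, if 0 < C₋ ≤ C₊ < ∞, then 0 < liminf_{n→∞} n^{1−θ} p_n ≤ limsup_{n→∞} n^{1−θ} p_n < ∞. -/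
open Filter

set_option maxHeartbeats 2000000

private lemma tts_anti_aux {p : ℕ → ℝ} (hmono : ∀ k : ℕ, 1 ≤ k → p (k + 1) ≤ p k) :
    ∀ i j : ℕ, 1 ≤ i → i ≤ j → p j ≤ p i := by
  intro i j hi hij
  induction j with
  | zero => omega
  | succ j ih =>
    rcases Nat.lt_or_ge j i with h | h
    · have : i = j + 1 := by omega
      simp [this]
    · exact (hmono j (by omega)).trans (ih h)

private lemma tts_sum_diff_eq (p : ℕ → ℝ) {n m : ℕ} (hnm : n ≤ m) :
    (∑ k ∈ Finset.Icc 1 m, p k) - (∑ k ∈ Finset.Icc 1 n, p k)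
      = ∑ k ∈ Finset.Ioc n m, p k := by
  have h0 : ∀ j : ℕ, Finset.Icc 1 j = Finset.Ioc 0 j := by
    intro j; ext k; simp [Finset.mem_Icc, Finset.mem_Ioc]; omega
  rw [h0, h0, ← Finset.sum_Ioc_consecutive p (Nat.zero_le n) hnm]
  ring

private lemma tts_sum_diff_le {p : ℕ → ℝ} (hmono : ∀ k : ℕ, 1 ≤ k → p (k + 1) ≤ p k)
    {n m : ℕ} (hn : 1 ≤ n) (hnm : n ≤ m) :
    (∑ k ∈ Finset.Icc 1 m, p k) - (∑ k ∈ Finset.Icc 1 n, p k) ≤ ((m : ℝ) - n) * p n := by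
  rw [tts_sum_diff_eq p hnm]
  have h := Finset.sum_le_card_nsmul (Finset.Ioc n m) p (p n) (fun k hk => by
    rw [Finset.mem_Ioc] at hk
    exact tts_anti_aux hmono n k hn hk.1.le)
  rw [Nat.card_Ioc, nsmul_eq_mul] at h
  have h2 : ((m - n : ℕ) : ℝ) = (m : ℝ) - n := by
    rw [Nat.cast_sub hnm]
  rw [← h2]; exact h

private lemma tts_le_sum_diff {p : ℕ → ℝ} (hmono : ∀ k : ℕ, 1 ≤ k → p (k + 1) ≤ p k)
    {n m : ℕ} (hn : 1 ≤ n) (hnm : n ≤ m) :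
    ((m : ℝ) - n) * p m ≤ (∑ k ∈ Finset.Icc 1 m, p k) - (∑ k ∈ Finset.Icc 1 n, p k) := by
  rw [tts_sum_diff_eq p hnm]
  have h := Finset.card_nsmul_le_sum (Finset.Ioc n m) p (p m) (fun k hk => by
    rw [Finset.mem_Ioc] at hk
    exact tts_anti_aux hmono k m (by omega) hk.2)
  rw [Nat.card_Ioc, nsmul_eq_mul] at h
  have h2 : ((m - n : ℕ) : ℝ) = (m : ℝ) - n := by
    rw [Nat.cast_sub hnm]
  rw [← h2]; exact h

/-- Two-sided Tauberian bounds for nonincreasing sequences in `[0,1]`: with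
`C₋ = liminf n^{−θ} ∑_{k≤n} p k` and `C₊ = limsup n^{−θ} ∑_{k≤n} p k` (assumed finite,
i.e. the normalized sums are bounded above), one has, for every `y > 1`,
`liminf n^{1−θ} p n ≥ (y^θ C₋ − C₊)/(y − 1)`, for every `x ∈ (0,1)`,
`limsup n^{1−θ} p n ≤ (C₊ − x^θ C₋)/(1 − x)`, and, in particular, if `C₋ > 0` then
`0 < liminf n^{1−θ} p n ≤ limsup n^{1−θ} p n < ∞`. -/
theorem tauberian_two_sided (p : ℕ → ℝ)
    (hp0 : ∀ k : ℕ, 1 ≤ k → 0 ≤ p k) (hp1 : ∀ k : ℕ, 1 ≤ k → p k ≤ 1)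
    (hmono : ∀ k : ℕ, 1 ≤ k → p (k + 1) ≤ p k)
    (θ : ℝ) (hθ0 : 0 < θ) (hθ1 : θ ≤ 1)
    (hbdd : IsBoundedUnder (· ≤ ·) atTop
      (fun n : ℕ => (n : ℝ) ^ (-θ) * ∑ k ∈ Finset.Icc 1 n, p k)) :
    (∀ y : ℝ, 1 < y →
      (y ^ θ * liminf (fun n : ℕ => (n : ℝ) ^ (-θ) * ∑ k ∈ Finset.Icc 1 n, p k) atTop
          - limsup (fun n : ℕ => (n : ℝ) ^ (-θ) * ∑ k ∈ Finset.Icc 1 n, p k) atTop)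
          / (y - 1)
        ≤ liminf (fun n : ℕ => (n : ℝ) ^ (1 - θ) * p n) atTop) ∧
    (∀ x : ℝ, 0 < x → x < 1 →
      limsup (fun n : ℕ => (n : ℝ) ^ (1 - θ) * p n) atTop
        ≤ (limsup (fun n : ℕ => (n : ℝ) ^ (-θ) * ∑ k ∈ Finset.Icc 1 n, p k) atTop
          - x ^ θ * liminf (fun n : ℕ => (n : ℝ) ^ (-θ) * ∑ k ∈ Finset.Icc 1 n, p k) atTop)
          / (1 - x)) ∧
    (0 < liminf (fun n : ℕ => (n : ℝ) ^ (-θ) * ∑ k ∈ Finset.Icc 1 n, p k) atTop →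
      0 < liminf (fun n : ℕ => (n : ℝ) ^ (1 - θ) * p n) atTop ∧
      liminf (fun n : ℕ => (n : ℝ) ^ (1 - θ) * p n) atTop
        ≤ limsup (fun n : ℕ => (n : ℝ) ^ (1 - θ) * p n) atTop ∧
      IsBoundedUnder (· ≤ ·) atTop (fun n : ℕ => (n : ℝ) ^ (1 - θ) * p n)) := by
  set f : ℕ → ℝ := fun n : ℕ => (n : ℝ) ^ (-θ) * ∑ k ∈ Finset.Icc 1 n, p k with hf
  set g : ℕ → ℝ := fun n : ℕ => (n : ℝ) ^ (1 - θ) * p n with hg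
  have hS0 : ∀ n : ℕ, 0 ≤ ∑ k ∈ Finset.Icc 1 n, p k := fun n =>
    Finset.sum_nonneg fun k hk => hp0 k (Finset.mem_Icc.mp hk).1
  have hf0 : ∀ n : ℕ, 0 ≤ f n := fun n =>
    mul_nonneg (Real.rpow_nonneg (Nat.cast_nonneg n) _) (hS0 n)
  have hg0 : ∀ n : ℕ, 1 ≤ n → 0 ≤ g n := fun n hn =>
    mul_nonneg (Real.rpow_nonneg (Nat.cast_nonneg n) _) (hp0 n hn)
  have hfbd_ge : IsBoundedUnder (· ≥ ·) atTop f := ⟨0, eventually_map.mpr (Eventually.of_forall hf0)⟩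
  have hgbd_ge : IsBoundedUnder (· ≥ ·) atTop g :=
    ⟨0, eventually_map.mpr (eventually_atTop.mpr ⟨1, fun n hn => hg0 n hn⟩)⟩
  have hrp : ∀ n : ℕ, 1 ≤ n → (n : ℝ) ^ (1 - θ) = (n : ℝ) * (n : ℝ) ^ (-θ) := by
    intro n hn
    have hN : (0:ℝ) < n := by exact_mod_cast hn
    rw [show (1 - θ) = 1 + (-θ) by ring, Real.rpow_add hN, Real.rpow_one]
  -- g is eventually dominated by 2 * f
  have hg2f : ∀ n : ℕ, 2 ≤ n → g n ≤ 2 * f n := by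
    intro n hn
    have hN : (0:ℝ) < n := by exact_mod_cast (by omega : 0 < n)
    have h1 : 1 ≤ n / 2 := by omega
    have h2 : n / 2 ≤ n := by omega
    have hle := tts_le_sum_diff hmono h1 h2
    have hhalf : (n:ℝ)/2 ≤ (n:ℝ) - ((n/2 : ℕ):ℝ) := by
      have := Nat.cast_div_le (m := n) (n := 2) (α := ℝ)
      push_cast at this ⊢
      linarith
    have hSn' := hS0 (n / 2)
    have hpn0 := hp0 n (by omega)
    have key : (n:ℝ)/2 * p n ≤ ∑ k ∈ Finset.Icc 1 n, p k := by
      nlinarith [hle]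
    have hpow : (0:ℝ) ≤ (n:ℝ) ^ (-θ) := Real.rpow_nonneg hN.le _
    simp only [hg, hf]
    rw [hrp n (by omega)]
    calc (n:ℝ) * (n:ℝ)^(-θ) * p n = (n:ℝ)^(-θ) * ((n:ℝ) * p n) := by ring
      _ ≤ (n:ℝ)^(-θ) * (2 * ∑ k ∈ Finset.Icc 1 n, p k) := by
          apply mul_le_mul_of_nonneg_left _ hpow; linarith
      _ = 2 * ((n:ℝ)^(-θ) * ∑ k ∈ Finset.Icc 1 n, p k) := by ring
  have hgbd_le : IsBoundedUnder (· ≤ ·) atTop g := by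
    obtain ⟨b, hb⟩ := hbdd
    rw [eventually_map] at hb
    exact ⟨2 * b, eventually_map.mpr <| by
      filter_upwards [hb, eventually_ge_atTop 2] with n h1 h2
      have := hg2f n h2
      have hfb : f n ≤ b := h1
      linarith⟩
  have hgcob_ge : IsCoboundedUnder (· ≥ ·) atTop g := hgbd_le.isCoboundedUnder_ge
  have hgcob_le : IsCoboundedUnder (· ≤ ·) atTop g := hgbd_ge.isCoboundedUnder_le
  -- Part 1
  have part1 : ∀ y : ℝ, 1 < y →
      (y ^ θ * liminf f atTop - limsup f atTop) / (y - 1) ≤ liminf g atTop := by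
    intro y hy
    have hy0 : (0:ℝ) < y := by linarith
    have hy1 : 0 < y - 1 := by linarith
    rw [div_le_iff₀ hy1]
    refine le_of_forall_pos_le_add fun ε hε => ?_
    have hyθ : 0 < y ^ θ := Real.rpow_pos_of_pos hy0 θ
    set δ := ε / (y ^ θ + 2) with hδdef
    have hδ : 0 < δ := by positivity
    have hδε : δ * (y ^ θ + 2) = ε := by
      rw [hδdef]; field_simp
    set m : ℕ → ℕ := fun n => ⌈y * n⌉₊ with hm
    have hmn : ∀ n : ℕ, n ≤ m n := by
      intro n
      have hcast : (n:ℝ) ≤ (⌈y * n⌉₊ : ℝ) := by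
        refine le_trans ?_ (Nat.le_ceil _)
        nlinarith [Nat.cast_nonneg (α := ℝ) n]
      exact_mod_cast hcast
    have hmtop : Tendsto m atTop atTop := tendsto_atTop_mono hmn tendsto_id
    have hev1 : ∀ᶠ n in atTop, liminf f atTop - δ < f (m n) :=
      hmtop.eventually (eventually_lt_of_lt_liminf (by linarith) hfbd_ge)
    have hev2 : ∀ᶠ n in atTop, f n < limsup f atTop + δ :=
      eventually_lt_of_limsup_lt (by linarith) hbdd
    have hev3 : ∀ᶠ n : ℕ in atTop, (n:ℝ) ^ (-θ) ≤ δ := by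
      have h := (tendsto_rpow_neg_atTop hθ0).comp
        (tendsto_natCast_atTop_atTop (R := ℝ))
      simpa using h.eventually (eventually_le_nhds hδ)
    have hkey : ∀ n : ℕ, 1 ≤ n →
        y ^ θ * f (m n) - f n ≤ (y - 1) * g n + (n:ℝ) ^ (-θ) := by
      intro n hn
      have hN : (0:ℝ) < n := by exact_mod_cast hn
      have hyn : (0:ℝ) < y * n := by positivity
      have hyM : y * n ≤ (m n : ℝ) := Nat.le_ceil _
      have hM1 : (m n : ℝ) < y * n + 1 := Nat.ceil_lt_add_one hyn.le
      have hM0 : (0:ℝ) < m n := lt_of_lt_of_le hyn hyM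
      have hMθ : 0 < (m n:ℝ)^θ := Real.rpow_pos_of_pos hM0 _
      have hNθ : 0 < (n:ℝ)^θ := Real.rpow_pos_of_pos hN _
      have hA : y ^ θ * (m n:ℝ) ^ (-θ) ≤ (n:ℝ) ^ (-θ) := by
        rw [Real.rpow_neg hM0.le, Real.rpow_neg hN.le, ← div_eq_mul_inv,
          inv_eq_one_div, div_le_div_iff₀ hMθ hNθ]
        calc y^θ * (n:ℝ)^θ = (y * n)^θ := (Real.mul_rpow hy0.le hN.le).symm
          _ ≤ (m n:ℝ)^θ := Real.rpow_le_rpow hyn.le hyM hθ0.le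
          _ = 1 * (m n:ℝ)^θ := (one_mul _).symm
      have hB := tts_sum_diff_le hmono hn (hmn n)
      have hSm0 := hS0 (m n)
      have hNθ0 : (0:ℝ) ≤ (n:ℝ)^(-θ) := Real.rpow_nonneg hN.le _
      have hC : y^θ * f (m n) ≤ (n:ℝ)^(-θ) * ∑ k ∈ Finset.Icc 1 (m n), p k := by
        simp only [hf]
        calc y^θ * ((m n:ℝ)^(-θ) * ∑ k ∈ Finset.Icc 1 (m n), p k)
            = (y^θ * (m n:ℝ)^(-θ)) * ∑ k ∈ Finset.Icc 1 (m n), p k := by ring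
          _ ≤ (n:ℝ)^(-θ) * ∑ k ∈ Finset.Icc 1 (m n), p k :=
              mul_le_mul_of_nonneg_right hA hSm0
      have hD : y^θ * f (m n) - f n ≤ (n:ℝ)^(-θ) * (((m n:ℝ) - n) * p n) := by
        have h5 := mul_le_mul_of_nonneg_left hB hNθ0
        simp only [hf] at hC ⊢
        nlinarith [hC]
      have hpn0 := hp0 n hn
      have hpn1 := hp1 n hn
      have hE : (m n:ℝ) - n ≤ (y - 1)*n + 1 := by linarith
      have hF : (n:ℝ)^(-θ) * (((m n:ℝ) - n) * p n)
          ≤ (y-1) * ((n:ℝ)^(1-θ) * p n) + (n:ℝ)^(-θ) := by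
        have h5 : ((m n:ℝ) - n) * p n ≤ ((y-1)*n + 1) * p n :=
          mul_le_mul_of_nonneg_right hE hpn0
        have h6 : (n:ℝ)^(1-θ) = n * (n:ℝ)^(-θ) := hrp n hn
        have h7 : (n:ℝ)^(-θ) * p n ≤ (n:ℝ)^(-θ) := by nlinarith
        calc (n:ℝ)^(-θ) * (((m n:ℝ) - n) * p n)
            ≤ (n:ℝ)^(-θ) * (((y-1)*n + 1) * p n) := mul_le_mul_of_nonneg_left h5 hNθ0
          _ = (y-1) * ((n:ℝ) * (n:ℝ)^(-θ) * p n) + (n:ℝ)^(-θ) * p n := by ring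
          _ ≤ (y-1) * ((n:ℝ)^(1-θ) * p n) + (n:ℝ)^(-θ) := by rw [h6]; linarith
      simp only [hg]
      linarith
    have hev : ∀ᶠ n in atTop,
        (y^θ * liminf f atTop - limsup f atTop - ε) / (y - 1) ≤ g n := by
      filter_upwards [hev1, hev2, hev3, eventually_ge_atTop 1] with n h1 h2 h3 h4
      rw [div_le_iff₀ hy1]
      have hk := hkey n h4
      have hmul : y^θ * (liminf f atTop - δ) ≤ y^θ * f (m n) :=
        mul_le_mul_of_nonneg_left h1.le hyθ.le
      nlinarith
    have hlif := le_liminf_of_le hgcob_ge hev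
    rw [div_le_iff₀ hy1] at hlif
    linarith
  -- Part 2
  have part2 : ∀ x : ℝ, 0 < x → x < 1 →
      limsup g atTop ≤ (limsup f atTop - x ^ θ * liminf f atTop) / (1 - x) := by
    intro x hx0 hx1
    have h1x : 0 < 1 - x := by linarith
    rw [le_div_iff₀ h1x]
    refine le_of_forall_pos_le_add fun ε hε => ?_
    have hxθ : 0 < x ^ θ := Real.rpow_pos_of_pos hx0 θ
    set δ := ε / (x ^ θ + 2) with hδdef
    have hδ : 0 < δ := by positivity
    have hδε : δ * (x ^ θ + 2) = ε := by rw [hδdef]; field_simp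
    set K := max (liminf f atTop - δ) 0 with hK
    have hK0 : 0 ≤ K := le_max_right _ _
    have hKL : liminf f atTop - δ ≤ K := le_max_left _ _
    set δ' := δ / (K + 1) with hδ'def
    have hδ' : 0 < δ' := by positivity
    have hδ'K : δ' * K ≤ δ := by
      rw [hδ'def]
      rw [div_mul_eq_mul_div, div_le_iff₀ (by linarith : (0:ℝ) < K + 1)]
      nlinarith
    set m : ℕ → ℕ := fun n => ⌊x * n⌋₊ with hm
    have hxn : Tendsto (fun n : ℕ => x * n) atTop atTop :=
      tendsto_natCast_atTop_atTop.const_mul_atTop hx0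
    have hmtop : Tendsto m atTop atTop := tendsto_nat_floor_atTop.comp hxn
    have hev1 : ∀ᶠ n in atTop, liminf f atTop - δ < f (m n) :=
      hmtop.eventually (eventually_lt_of_lt_liminf (by linarith) hfbd_ge)
    have hev2 : ∀ᶠ n in atTop, f n < limsup f atTop + δ :=
      eventually_lt_of_limsup_lt (by linarith) hbdd
    have hev3 : ∀ᶠ n in atTop, 1 ≤ m n := by
      filter_upwards [hxn.eventually_ge_atTop 1] with n h
      exact Nat.le_floor (by exact_mod_cast h)
    have hbx : Tendsto (fun n : ℕ => x - 1/(n:ℝ)) atTop (nhds x) := by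
      have : Tendsto (fun n : ℕ => 1/(n:ℝ)) atTop (nhds 0) := tendsto_one_div_atTop_nhds_zero_nat
      simpa using tendsto_const_nhds.sub this
    have hbθ : Tendsto (fun n : ℕ => (x - 1/(n:ℝ)) ^ θ) atTop (nhds (x ^ θ)) :=
      ((Real.continuousAt_rpow_const x θ (Or.inl hx0.ne')).tendsto).comp hbx
    have hev4 : ∀ᶠ n : ℕ in atTop, x ^ θ - δ' < (x - 1/(n:ℝ)) ^ θ :=
      hbθ.eventually (eventually_gt_nhds (by linarith))
    have hev5 : ∀ᶠ n : ℕ in atTop, 0 < x - 1/(n:ℝ) :=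
      hbx.eventually (eventually_gt_nhds hx0)
    have hev : ∀ᶠ n in atTop,
        g n ≤ (limsup f atTop - x ^ θ * liminf f atTop + ε) / (1 - x) := by
      filter_upwards [hev1, hev2, hev3, hev4, hev5, eventually_ge_atTop 1]
        with n h1 h2 h3 h4 h5 h6
      rw [le_div_iff₀ h1x]
      have hN : (0:ℝ) < n := by exact_mod_cast h6
      have hxn0 : (0:ℝ) ≤ x * n := by positivity
      have hMle : (m n : ℝ) ≤ x * n := Nat.floor_le hxn0
      have hMgt : x * n - 1 < (m n : ℝ) := Nat.sub_one_lt_floor _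
      have hM0 : (0:ℝ) < m n := by exact_mod_cast h3
      have hmn : m n ≤ n := by
        have : (m n : ℝ) < n := lt_of_le_of_lt hMle (by nlinarith)
        exact_mod_cast this.le
      have hNθ0 : (0:ℝ) ≤ (n:ℝ)^(-θ) := Real.rpow_nonneg hN.le _
      have hpn0 := hp0 n h6
      -- lower bound on the weighted tail sum
      have hc : x ^ θ * (liminf f atTop - δ) - δ
          ≤ (n:ℝ)^(-θ) * ∑ k ∈ Finset.Icc 1 (m n), p k := by
        set c := (x - 1/(n:ℝ)) ^ θ with hc'
        have hc0 : 0 ≤ c := Real.rpow_nonneg h5.le _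
        have hfm : K ≤ f (m n) := max_le h1.le (hf0 _)
        have hratio : c ≤ ((m n : ℝ)/n) ^ θ := by
          apply Real.rpow_le_rpow h5.le _ hθ0.le
          rw [le_div_iff₀ hN]
          have h1n : (1/(n:ℝ)) * n = 1 := by field_simp
          nlinarith [hMgt, h1n]
        have hfm' : (n:ℝ)^(-θ) * ∑ k ∈ Finset.Icc 1 (m n), p k
            = ((m n : ℝ)/n) ^ θ * f (m n) := by
          simp only [hf]
          rw [Real.div_rpow (Nat.cast_nonneg _) hN.le]
          rw [Real.rpow_neg (Nat.cast_nonneg (m n)), Real.rpow_neg hN.le]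
          have hMθ : ((m n:ℝ))^θ ≠ 0 := ne_of_gt (Real.rpow_pos_of_pos hM0 _)
          field_simp
        rw [hfm']
        have hfm0 : 0 ≤ f (m n) := hf0 _
        have step1 : c * K ≤ ((m n : ℝ)/n) ^ θ * f (m n) :=
          mul_le_mul hratio (hfm.trans (le_refl _)) hK0 (Real.rpow_nonneg (by positivity) _)
        have step2 : x ^ θ * (liminf f atTop - δ) - δ ≤ c * K := by
          have hcx : (x ^ θ - δ') * K ≤ c * K :=
            mul_le_mul_of_nonneg_right h4.le hK0
          have : x ^ θ * K - δ ≤ c * K := by nlinarith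
          nlinarith [mul_le_mul_of_nonneg_left hKL hxθ.le]
        linarith
      -- upper bound on (1-x) g n
      have hup : (1 - x) * g n ≤ f n - (n:ℝ)^(-θ) * ∑ k ∈ Finset.Icc 1 (m n), p k := by
        have hsum := tts_le_sum_diff hmono h3 hmn
        have h7 : (1 - x) * (n:ℝ) ≤ (n:ℝ) - (m n : ℝ) := by nlinarith
        have h8 : (1 - x) * (n:ℝ) * p n ≤ ((n:ℝ) - (m n : ℝ)) * p n :=
          mul_le_mul_of_nonneg_right h7 hpn0
        have h9 := mul_le_mul_of_nonneg_left hsum hNθ0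
        simp only [hg, hf]
        rw [hrp n h6]
        nlinarith [h8, h9, mul_le_mul_of_nonneg_left h8 hNθ0]
      have hfn : f n ≤ limsup f atTop + δ := h2.le
      nlinarith [hup, hc, hfn]
    have hls := limsup_le_of_le hgcob_le hev
    rw [le_div_iff₀ h1x] at hls
    linarith
  refine ⟨part1, part2, fun hL => ?_⟩
  obtain ⟨y, hyU, hy1⟩ :=
    (((tendsto_rpow_atTop hθ0).eventually_gt_atTop
      (limsup f atTop / liminf f atTop)).and (eventually_gt_atTop 1)).exists
  have h1 := part1 y hy1
  have hnum : 0 < y ^ θ * liminf f atTop - limsup f atTop := by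
    have := (div_lt_iff₀ hL).mp hyU
    nlinarith
  have hpos : 0 < (y ^ θ * liminf f atTop - limsup f atTop) / (y - 1) :=
    div_pos hnum (by linarith)
  exact ⟨lt_of_lt_of_le hpos h1, liminf_le_limsup hgbd_le hgbd_ge, hgbd_le⟩
end

section
/- Let (Ω, μ, T) be an ergodic measure-preserving dynamical system on a probability space, and let f : Ω → ℤ be measurable. Define Z_0 := 0 and Z_n(ω) := Σ_{k=0}^{n−1} f(T^k ω) for n ≥ 1, and let R_n(ω) := #{Z_0(ω), Z_1(ω), …, Z_n(ω)}. Then for μ-almost every ω, R_n(ω)/n converges as n → ∞ to μ({ω : Z_j(ω) ≠ 0 for all j ≥ 1}). -/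
open MeasureTheory Filter Set
open scoped Classical Topology

set_option linter.unusedSectionVars false
set_option maxHeartbeats 1000000

namespace RangeErgodic

variable {Ω : Type*} [MeasurableSpace Ω] {μ : Measure Ω}

/-- Birkhoff sum of the indicator of `B`, real-valued. -/
noncomputable def cntR (T : Ω → Ω) (B : Set Ω) (n : ℕ) (x : Ω) : ℝ :=
  birkhoffSum T (B.indicator fun _ => (1:ℝ)) n x

lemma cntR_def (T : Ω → Ω) (B : Set Ω) (n : ℕ) (x : Ω) :
    cntR T B n x = ∑ k ∈ Finset.range n, B.indicator (fun _ => (1:ℝ)) (T^[k] x) := rfl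

lemma cntR_nonneg (T : Ω → Ω) (B : Set Ω) (n : ℕ) (x : Ω) : 0 ≤ cntR T B n x := by
  rw [cntR_def]
  exact Finset.sum_nonneg fun _ _ => Set.indicator_nonneg (fun _ _ => zero_le_one) _

lemma cntR_le (T : Ω → Ω) (B : Set Ω) (n : ℕ) (x : Ω) : cntR T B n x ≤ n := by
  rw [cntR_def]
  calc ∑ k ∈ Finset.range n, B.indicator (fun _ => (1:ℝ)) (T^[k] x)
      ≤ ∑ _k ∈ Finset.range n, (1:ℝ) :=
        Finset.sum_le_sum fun i _ => Set.indicator_le_self' (fun _ _ => zero_le_one) _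
    _ = n := by simp

lemma cntR_add (T : Ω → Ω) (B : Set Ω) (m n : ℕ) (x : Ω) :
    cntR T B (m + n) x = cntR T B m x + cntR T B n (T^[m] x) :=
  birkhoffSum_add T _ m n x

lemma cntR_one (T : Ω → Ω) (B : Set Ω) (x : Ω) :
    cntR T B 1 x = if x ∈ B then 1 else 0 := by
  simp only [cntR, birkhoffSum_one', Set.indicator_apply]

lemma cntR_succ' (T : Ω → Ω) (B : Set Ω) (n : ℕ) (x : Ω) :
    cntR T B (n + 1) x = (if x ∈ B then (1:ℝ) else 0) + cntR T B n (T x) := by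
  have := birkhoffSum_succ' T (B.indicator fun _ => (1:ℝ)) n x
  simpa [cntR, Set.indicator_apply] using this

lemma measurable_cntR {T : Ω → Ω} (hTm : Measurable T) {B : Set Ω} (hB : MeasurableSet B)
    (n : ℕ) : Measurable fun x => cntR T B n x := by
  simp only [cntR_def]
  exact Finset.measurable_sum _ fun i _ =>
    (measurable_const.indicator hB).comp (hTm.iterate i)

lemma integrable_ind_iter {T : Ω → Ω} (hTm : Measurable T) {B : Set Ω} (hB : MeasurableSet B)
    [IsFiniteMeasure μ] (i : ℕ) :
    Integrable (fun x => B.indicator (fun _ => (1:ℝ)) (T^[i] x)) μ := by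
  constructor
  · exact (((measurable_const.indicator hB).comp (hTm.iterate i))).aestronglyMeasurable
  · apply HasFiniteIntegral.mono (g := fun _ => (1:ℝ))
    · exact (hasFiniteIntegral_const _)
    · refine Eventually.of_forall fun x => ?_
      simp only [Set.indicator_apply, Real.norm_eq_abs]
      split_ifs <;> simp

lemma integrable_cntR {T : Ω → Ω} (hTm : Measurable T) {B : Set Ω} (hB : MeasurableSet B)
    [IsFiniteMeasure μ] (n : ℕ) : Integrable (fun x => cntR T B n x) μ := by
  simp only [cntR_def]
  exact MeasureTheory.integrable_finset_sum _ fun i _ => integrable_ind_iter hTm hB i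

lemma integral_cntR {T : Ω → Ω} (hT : MeasurePreserving T μ μ) {B : Set Ω}
    (hB : MeasurableSet B) [IsProbabilityMeasure μ] (n : ℕ) :
    ∫ x, cntR T B n x ∂μ = n * (μ B).toReal := by
  simp only [cntR_def]
  rw [MeasureTheory.integral_finset_sum]
  · have : ∀ k, ∫ x, B.indicator (fun _ => (1:ℝ)) (T^[k] x) ∂μ = (μ B).toReal := by
      intro k
      have hk : MeasurePreserving (T^[k]) μ μ := hT.iterate k
      have h1 := integral_map (φ := T^[k]) (f := B.indicator fun _ => (1:ℝ))
        hk.measurable.aemeasurable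
        (by rw [hk.map_eq]; exact ((measurable_const.indicator hB)).aestronglyMeasurable)
      rw [hk.map_eq] at h1
      rw [← h1, MeasureTheory.integral_indicator hB]
      simp [Measure.real]
    simp [this]
  · exact fun i _ => integrable_ind_iter hT.measurable hB i


lemma kw_core (T : Ω → Ω) (B : Set Ω) (a : ℝ) (ha : 0 ≤ a) (N : ℕ)
    (E : Set Ω) (hE : ∀ x, x ∈ E → ∃ n, 1 ≤ n ∧ n ≤ N ∧ a * n ≤ cntR T B n x) :
    ∀ (L : ℕ) (x : Ω), a * ((L : ℝ) - N - cntR T Eᶜ L x) ≤ cntR T B L x := by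
  intro L
  induction L using Nat.strong_induction_on with
  | _ L IH =>
    intro x
    by_cases hLN : L ≤ N
    · have h1 : (L:ℝ) - N - cntR T Eᶜ L x ≤ 0 := by
        have h2 : (L:ℝ) ≤ N := by exact_mod_cast hLN
        linarith [cntR_nonneg T Eᶜ L x]
      nlinarith [cntR_nonneg T B L x]
    · push_neg at hLN
      by_cases hx : x ∈ E
      · obtain ⟨n, hn1, hnN, hna⟩ := hE x hx
        have hnL : n ≤ L := le_of_lt (lt_of_le_of_lt hnN hLN)
        have hsplitB := cntR_add T B n (L - n) x
        have hsplitE := cntR_add T Eᶜ n (L - n) x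
        rw [Nat.add_sub_cancel' hnL] at hsplitB hsplitE
        have hIH := IH (L - n) (by omega) (T^[n] x)
        have cast1 : ((L - n : ℕ) : ℝ) = (L:ℝ) - n := by
          rw [Nat.cast_sub hnL]
        rw [cast1] at hIH
        have hEc : cntR T Eᶜ (L - n) (T^[n] x) ≤ cntR T Eᶜ L x := by
          rw [hsplitE]; linarith [cntR_nonneg T Eᶜ n x]
        have key : a * ((L:ℝ) - N - cntR T Eᶜ L x)
            ≤ a * ((L:ℝ) - N - cntR T Eᶜ (L - n) (T^[n] x)) :=
          mul_le_mul_of_nonneg_left (by linarith) ha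
        have hring : a * ((L:ℝ) - N - cntR T Eᶜ (L - n) (T^[n] x))
            = a * n + a * ((L:ℝ) - n - N - cntR T Eᶜ (L - n) (T^[n] x)) := by ring
        linarith
      · have hL1 : 1 ≤ L := by omega
        have hsplitB := cntR_add T B 1 (L - 1) x
        have hsplitE := cntR_add T Eᶜ 1 (L - 1) x
        rw [Nat.add_sub_cancel' hL1] at hsplitB hsplitE
        have hE1 : cntR T Eᶜ 1 x = 1 := by rw [cntR_one]; simp [hx]
        have hIH := IH (L - 1) (by omega) (T^[1] x)
        have cast1 : ((L - 1 : ℕ) : ℝ) = (L:ℝ) - 1 := by rw [Nat.cast_sub hL1]; simp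
        rw [cast1] at hIH
        rw [hE1] at hsplitE
        have harg : (L:ℝ) - N - cntR T Eᶜ L x
            = (L:ℝ) - 1 - N - cntR T Eᶜ (L - 1) (T^[1] x) := by linarith
        rw [harg]
        linarith [cntR_nonneg T B 1 x]

lemma kw_le {T : Ω → Ω} (hT : MeasurePreserving T μ μ) [IsProbabilityMeasure μ]
    {B : Set Ω} (hB : MeasurableSet B) {c : ℝ}
    (h : ∀ᵐ x ∂μ, ∀ ε : ℝ, 0 < ε → ∃ n : ℕ, 1 ≤ n ∧ (c - ε) * n ≤ cntR T B n x) :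
    c ≤ (μ B).toReal := by
  rcases le_or_gt c 0 with hc | hc
  · exact hc.trans ENNReal.toReal_nonneg
  have main : ∀ ε : ℝ, 0 < ε → ε < c → (c - ε) * (1 - ε) ≤ (μ B).toReal := by
    intro ε hε hεc
    set a := c - ε with ha_def
    have ha : 0 < a := by rw [ha_def]; linarith
    set E : ℕ → Set Ω := fun N => {x | ∃ n, 1 ≤ n ∧ n ≤ N ∧ a * n ≤ cntR T B n x}
      with hE_def
    have hEmeas : ∀ N, MeasurableSet (E N) := by
      intro N
      have : E N = ⋃ n ∈ Finset.Icc 1 N, {x | a * n ≤ cntR T B n x} := by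
        ext x
        simp only [hE_def, mem_setOf_eq, mem_iUnion, Finset.mem_Icc, exists_prop]
        constructor
        · rintro ⟨n, h1, h2, h3⟩; exact ⟨n, ⟨h1, h2⟩, h3⟩
        · rintro ⟨n, ⟨h1, h2⟩, h3⟩; exact ⟨n, h1, h2, h3⟩
      rw [this]
      exact (Finset.Icc 1 N).measurableSet_biUnion fun n _ =>
        measurableSet_le measurable_const (measurable_cntR hT.measurable hB n)
    have hmono : Monotone E := by
      intro N M hNM x hx
      obtain ⟨n, h1, h2, h3⟩ := hx
      exact ⟨n, h1, h2.trans hNM, h3⟩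
    have hnull : μ (⋂ N, (E N)ᶜ) = 0 := by
      have hae : ∀ᵐ x ∂μ, x ∈ ⋃ N, E N := by
        filter_upwards [h] with x hx
        obtain ⟨n, hn1, hn2⟩ := hx ε hε
        exact mem_iUnion.mpr ⟨n, n, hn1, le_refl n, hn2⟩
      rw [← compl_iUnion]
      rw [ae_iff] at hae
      exact hae
    have htend : Tendsto (fun N => (μ ((E N)ᶜ)).toReal) atTop (𝓝 0) := by
      have h1 : Tendsto (fun N => μ ((E N)ᶜ)) atTop (𝓝 (μ (⋂ N, (E N)ᶜ))) := by
        apply tendsto_measure_iInter_atTop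
        · exact fun N => (hEmeas N).compl.nullMeasurableSet
        · exact fun i j hij => compl_subset_compl.mpr (hmono hij)
        · exact ⟨0, measure_ne_top μ _⟩
      rw [hnull] at h1
      have := (ENNReal.tendsto_toReal (by simp)).comp h1
      exact this
    obtain ⟨N, hN⟩ : ∃ N : ℕ, (μ ((E N)ᶜ)).toReal < ε := by
      have := (htend.eventually (eventually_lt_nhds hε)).exists
      simpa using this
    set m := (μ B).toReal
    set eN := (μ ((E N)ᶜ)).toReal with heN_def
    have hstep : ∀ L : ℕ, a * ((L:ℝ) - N - (L:ℝ) * eN) ≤ (L:ℝ) * m := by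
      intro L
      have hcore := kw_core T B a ha.le N (E N) (fun x hx => hx)
      have hmono' : ∫ x, a * ((L:ℝ) - N - cntR T (E N)ᶜ L x) ∂μ
          ≤ ∫ x, cntR T B L x ∂μ := by
        apply integral_mono _ (integrable_cntR hT.measurable hB L) (hcore L)
        apply Integrable.const_mul
        exact (integrable_const _).sub (integrable_cntR hT.measurable (hEmeas N).compl L)
      rw [integral_cntR hT hB] at hmono'
      have hlhs : ∫ x, a * ((L:ℝ) - N - cntR T (E N)ᶜ L x) ∂μ
          = a * ((L:ℝ) - N - (L:ℝ) * eN) := by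
        rw [integral_const_mul]
        congr 1
        rw [integral_sub (integrable_const _)
          (integrable_cntR hT.measurable (hEmeas N).compl L),
          integral_cntR hT (hEmeas N).compl, integral_const]
        simp [Measure.real, heN_def]
      rw [hlhs] at hmono'
      exact hmono'
    have hdiv : ∀ L : ℕ, 1 ≤ L → a * (1 - (N:ℝ)/(L:ℝ) - eN) ≤ m := by
      intro L hL
      have hLpos : (0:ℝ) < L := by exact_mod_cast hL
      have h1 : a * (1 - (N:ℝ)/(L:ℝ) - eN) = (a * ((L:ℝ) - N - (L:ℝ) * eN)) / L := by
        field_simp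
      rw [h1, div_le_iff₀ hLpos]
      calc a * ((L:ℝ) - N - (L:ℝ) * eN) ≤ (L:ℝ) * m := hstep L
        _ = m * L := by ring
    have hlim : Tendsto (fun L : ℕ => a * (1 - (N:ℝ)/(L:ℝ) - eN)) atTop
        (𝓝 (a * (1 - 0 - eN))) := by
      apply Tendsto.const_mul
      exact ((tendsto_const_nhds.sub (tendsto_const_div_atTop_nhds_zero_nat _)).sub
        tendsto_const_nhds)
    have h2 : a * (1 - eN) ≤ m := by
      have := le_of_tendsto hlim ((eventually_ge_atTop 1).mono fun L hL => hdiv L hL)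
      simpa using this
    calc a * (1 - ε) ≤ a * (1 - eN) := by
          apply mul_le_mul_of_nonneg_left _ ha.le
          linarith
      _ ≤ m := h2
  -- pass ε → 0⁺
  have hlim : Tendsto (fun ε : ℝ => (c - ε) * (1 - ε)) (𝓝[>] 0) (𝓝 c) := by
    have h1 : Tendsto (fun ε : ℝ => (c - ε) * (1 - ε)) (𝓝 0) (𝓝 ((c - 0) * (1 - 0))) := by
      exact ((tendsto_const_nhds.sub tendsto_id).mul (tendsto_const_nhds.sub tendsto_id))
    simpa using h1.mono_left nhdsWithin_le_nhds
  refine le_of_tendsto hlim ?_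
  filter_upwards [Ioo_mem_nhdsGT hc] with ε hε
  exact main ε hε.1 hε.2
  -- need: a.e. hypothesis used! (h unused?) -- fix: main needs h

/-- average of the indicator count -/
noncomputable def avg (T : Ω → Ω) (B : Set Ω) (x : Ω) (n : ℕ) : ℝ := cntR T B n x / n

lemma avg_nonneg (T : Ω → Ω) (B : Set Ω) (x : Ω) (n : ℕ) : 0 ≤ avg T B x n :=
  div_nonneg (cntR_nonneg T B n x) (Nat.cast_nonneg n)

lemma avg_le_one (T : Ω → Ω) (B : Set Ω) (x : Ω) (n : ℕ) : avg T B x n ≤ 1 := by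
  rcases Nat.eq_zero_or_pos n with rfl | hn
  · simp [avg]
  · have hn' : (0:ℝ) < n := by exact_mod_cast hn
    rw [avg, div_le_one hn']
    exact cntR_le T B n x

lemma limsup_le_limsup_of_sub {u v : ℕ → ℝ} (hu0 : ∀ n, 0 ≤ u n)
    (hv0 : ∀ n, 0 ≤ v n) (hv1 : ∀ n, v n ≤ 1)
    (h : Tendsto (fun n => u n - v n) atTop (𝓝 0)) :
    limsup u atTop ≤ limsup v atTop := by
  have hcu : IsCoboundedUnder (· ≤ ·) atTop u :=
    isCoboundedUnder_le_of_eventually_le atTop (Eventually.of_forall hu0)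
  have hcv : IsCoboundedUnder (· ≤ ·) atTop v :=
    isCoboundedUnder_le_of_eventually_le atTop (Eventually.of_forall hv0)
  refine le_of_forall_pos_le_add fun ε hε => ?_
  have hev : ∀ᶠ n in atTop, u n ≤ v n + ε := by
    filter_upwards [h.eventually (eventually_le_nhds hε)] with n hn
    linarith
  calc limsup u atTop ≤ limsup (fun n => v n + ε) atTop :=
        limsup_le_limsup hev hcu (isBoundedUnder_of ⟨1 + ε, fun n => by linarith [hv1 n]⟩)
    _ = limsup v atTop + ε :=
        limsup_add_const atTop v ε (isBoundedUnder_of ⟨1, hv1⟩) hcv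

lemma limsup_eq_limsup_of_sub {u v : ℕ → ℝ} (hu0 : ∀ n, 0 ≤ u n) (hu1 : ∀ n, u n ≤ 1)
    (hv0 : ∀ n, 0 ≤ v n) (hv1 : ∀ n, v n ≤ 1)
    (h : Tendsto (fun n => u n - v n) atTop (𝓝 0)) :
    limsup u atTop = limsup v atTop := by
  refine le_antisymm (limsup_le_limsup_of_sub hu0 hv0 hv1 h) ?_
  refine limsup_le_limsup_of_sub hv0 hu0 hu1 ?_
  have := h.neg
  simp only [neg_zero, neg_sub] at this
  exact this

lemma limsup_avg_comp (T : Ω → Ω) (B : Set Ω) (x : Ω) :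
    limsup (avg T B (T x)) atTop = limsup (avg T B x) atTop := by
  have h1 : limsup (avg T B x) atTop = limsup (fun n => avg T B x (n + 1)) atTop :=
    (limsup_nat_add (avg T B x) 1).symm
  rw [h1]
  symm
  apply limsup_eq_limsup_of_sub
  · exact fun n => avg_nonneg T B x (n + 1)
  · exact fun n => avg_le_one T B x (n + 1)
  · exact fun n => avg_nonneg T B (T x) n
  · exact fun n => avg_le_one T B (T x) n
  · -- difference tends to 0
    apply squeeze_zero_norm (a := fun n : ℕ => 3 / ((n : ℝ) + 1))
    · intro n
      rcases Nat.eq_zero_or_pos n with rfl | hn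
      · simp only [avg, cntR_succ']
        have h0 : cntR T B 0 (T x) = 0 := by simp [cntR_def]
        rw [h0]
        simp only [Nat.cast_zero, Nat.cast_one]
        rw [div_zero]
        split_ifs <;> norm_num
      · have hn' : (1:ℝ) ≤ n := by exact_mod_cast hn
        have hnpos : (0:ℝ) < n := by linarith
        have hn1 : (0:ℝ) < (n:ℝ) + 1 := by linarith
        set g : ℝ := if x ∈ B then (1:ℝ) else 0 with hg
        have hg0 : 0 ≤ g := by rw [hg]; split_ifs <;> norm_num
        have hg1 : g ≤ 1 := by rw [hg]; split_ifs <;> norm_num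
        set w := cntR T B n (T x) with hw
        have hw0 : 0 ≤ w := cntR_nonneg T B n (T x)
        have hwn : w ≤ n := cntR_le T B n (T x)
        have key : avg T B x (n + 1) - avg T B (T x) n
            = (g * n - w) / ((n:ℝ) * ((n:ℝ) + 1)) := by
          simp only [avg, cntR_succ', ← hg, ← hw, Nat.cast_add, Nat.cast_one]
          field_simp
          ring
        rw [key, Real.norm_eq_abs, abs_div,
          abs_of_pos (show (0:ℝ) < (n:ℝ) * ((n:ℝ) + 1) by positivity)]
        have hnum : |g * n - w| ≤ (n:ℝ) := by
          rw [abs_le]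
          constructor <;> nlinarith
        calc |g * (n:ℝ) - w| / ((n:ℝ) * ((n:ℝ) + 1)) ≤ (n:ℝ) / ((n:ℝ) * ((n:ℝ) + 1)) := by
              gcongr
          _ = 1 / ((n:ℝ) + 1) := by field_simp
          _ ≤ 3 / ((n:ℝ) + 1) := by gcongr <;> norm_num
    · have h3 : Tendsto (fun n : ℕ => 3 / ((n : ℝ) + 1)) atTop (𝓝 0) := by
        apply Tendsto.comp (tendsto_const_div_atTop_nhds_zero_nat 3)
          (tendsto_add_atTop_nat 1) |>.congr
        intro n
        simp only [Function.comp_apply]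
        push_cast
        ring
      exact h3

variable {T : Ω → Ω} {B : Set Ω}

lemma cntR_add_compl (T : Ω → Ω) (B : Set Ω) (n : ℕ) (x : Ω) :
    cntR T B n x + cntR T Bᶜ n x = n := by
  rw [cntR_def, cntR_def, ← Finset.sum_add_distrib]
  have : ∀ y : Ω, B.indicator (fun _ => (1:ℝ)) y + Bᶜ.indicator (fun _ => (1:ℝ)) y = 1 := by
    intro y
    by_cases hy : y ∈ B <;> simp [Set.indicator_apply, hy]
  simp [this]

lemma exists_limsup_const [IsProbabilityMeasure μ] (hT : Ergodic T μ)
    (hB : MeasurableSet B) :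
    ∃ c : ℝ, c ≤ (μ B).toReal ∧ ∀ᵐ x ∂μ, limsup (avg T B x) atTop = c := by
  have hF : Measurable fun x => limsup (avg T B x) atTop := by
    apply Measurable.limsup
    intro n
    exact (measurable_cntR hT.measurable hB n).div_const _
  obtain ⟨c, hc⟩ := hT.ae_eq_const_of_ae_eq_comp₀ hF.nullMeasurable
    (Eventually.of_forall fun x => limsup_avg_comp T B x)
  refine ⟨c, ?_, hc⟩
  apply kw_le hT.toMeasurePreserving hB
  filter_upwards [hc] with x hx
  intro ε hε
  have hlt : c - ε < limsup (avg T B x) atTop := by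
    rw [hx]; simp only [Function.const]; linarith
  have hfreq : ∃ᶠ n in atTop, c - ε < avg T B x n := by
    apply frequently_lt_of_lt_limsup _ hlt
    exact isCoboundedUnder_le_of_eventually_le atTop
      (Eventually.of_forall fun n => avg_nonneg T B x n)
  obtain ⟨n, hn1, hn2⟩ := (hfreq.and_eventually (eventually_ge_atTop 1)).exists
  refine ⟨n, hn2, ?_⟩
  have hnpos : (0:ℝ) < n := by exact_mod_cast hn2
  have := (lt_div_iff₀ hnpos).mp (by simpa [avg] using hn1)
  linarith

lemma birkhoff_indicator [IsProbabilityMeasure μ] (hT : Ergodic T μ)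
    (hB : MeasurableSet B) :
    ∀ᵐ x ∂μ, Tendsto (avg T B x) atTop (𝓝 (μ B).toReal) := by
  obtain ⟨c, hcle, hc⟩ := exists_limsup_const hT hB
  obtain ⟨c', hcle', hc'⟩ := exists_limsup_const hT hB.compl
  have hcompl : (μ Bᶜ).toReal = 1 - (μ B).toReal := by
    have h1 : μ Bᶜ = 1 - μ B := prob_compl_eq_one_sub hB
    rw [h1, ENNReal.toReal_sub_of_le prob_le_one ENNReal.one_ne_top, ENNReal.toReal_one]
  filter_upwards [hc, hc'] with x hx hx'
  -- liminf lower bound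
  have hliminf : 1 - c' ≤ liminf (avg T B x) atTop := by
    refine le_of_forall_pos_le_add fun ε hε => ?_
    have hev : ∀ᶠ n in atTop, avg T Bᶜ x n < c' + ε := by
      apply eventually_lt_of_limsup_lt
      · rw [hx']; linarith
      · exact isBoundedUnder_of ⟨1, avg_le_one T Bᶜ x⟩
    have hev2 : ∀ᶠ n in atTop, 1 - c' - ε ≤ avg T B x n := by
      filter_upwards [hev, eventually_ge_atTop 1] with n hn hn1
      have hnpos : (0:ℝ) < n := by exact_mod_cast hn1
      have hsum := cntR_add_compl T B n x
      have : avg T B x n + avg T Bᶜ x n = 1 := by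
        rw [avg, avg, ← add_div, hsum, div_self hnpos.ne']
      linarith
    have := le_liminf_of_le (α := ℝ)
      (isCoboundedUnder_ge_of_eventually_le atTop
        (Eventually.of_forall fun n => avg_le_one T B x n)) hev2
    linarith
  have hchain : (μ B).toReal ≤ liminf (avg T B x) atTop := by
    have : 1 - c' ≥ (μ B).toReal := by rw [hcompl] at hcle'; linarith
    linarith
  have hsup : limsup (avg T B x) atTop ≤ (μ B).toReal := by
    rw [hx]; simpa using hcle
  -- conclude
  have heq : liminf (avg T B x) atTop = limsup (avg T B x) atTop := by
    apply le_antisymm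
    · exact liminf_le_limsup (isBoundedUnder_of ⟨1, avg_le_one T B x⟩)
        (isBoundedUnder_of ⟨0, avg_nonneg T B x⟩)
    · rw [hx]
      exact le_trans (by simpa using hcle) hchain
  apply tendsto_of_le_liminf_of_limsup_le hchain hsup
    (isBoundedUnder_of ⟨1, avg_le_one T B x⟩)
    (isBoundedUnder_of ⟨0, avg_nonneg T B x⟩)


section Range

variable (T : Ω → Ω) (f : Ω → ℤ)

/-- ergodic sums -/
def Z (k : ℕ) (ω : Ω) : ℤ := ∑ i ∈ Finset.range k, f (T^[i] ω)

lemma Z_cocycle (k l : ℕ) (hkl : k ≤ l) (ω : Ω) :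
    Z T f l ω = Z T f k ω + Z T f (l - k) (T^[k] ω) := by
  have := birkhoffSum_add T f k (l - k) ω
  rw [Nat.add_sub_cancel' hkl] at this
  exact this

/-- the set of points which never return to 0 -/
def A : Set Ω := {ω | ∀ j : ℕ, 1 ≤ j → Z T f j ω ≠ 0}

/-- no return to 0 within the first M times -/
def AM (M : ℕ) : Set Ω := {ω | ∀ j : ℕ, 1 ≤ j → j ≤ M → Z T f j ω ≠ 0}

variable {T f}

lemma measurable_Z (hTm : Measurable T) (hf : Measurable f) (k : ℕ) :
    Measurable (Z T f k) :=
  Finset.measurable_sum _ fun i _ => hf.comp (hTm.iterate i)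

lemma measurable_A (hTm : Measurable T) (hf : Measurable f) :
    MeasurableSet (A T f) := by
  have : A T f = ⋂ (j : ℕ), ⋂ (_ : 1 ≤ j), {ω | Z T f j ω ≠ 0} := by
    ext ω; simp [A, mem_iInter]
  rw [this]
  exact MeasurableSet.iInter fun j => MeasurableSet.iInter fun _ =>
    ((measurable_Z hTm hf j) (measurableSet_singleton 0)).compl

lemma measurable_AM (hTm : Measurable T) (hf : Measurable f) (M : ℕ) :
    MeasurableSet (AM T f M) := by
  have : AM T f M = ⋂ (j : ℕ), ⋂ (_ : 1 ≤ j), ⋂ (_ : j ≤ M), {ω | Z T f j ω ≠ 0} := by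
    ext ω; simp [AM, mem_iInter]
  rw [this]
  exact MeasurableSet.iInter fun j => MeasurableSet.iInter fun _ =>
    MeasurableSet.iInter fun _ =>
    ((measurable_Z hTm hf j) (measurableSet_singleton 0)).compl

lemma iInter_AM : ⋂ M, AM T f M = A T f := by
  ext ω
  simp only [mem_iInter, AM, A, mem_setOf_eq]
  constructor
  · intro h j hj
    exact h j j hj le_rfl
  · intro h M j hj _
    exact h j hj

lemma cntR_eq_card (B : Set Ω) (m : ℕ) (ω : Ω) :
    cntR T B m ω = (((Finset.range m).filter fun k => T^[k] ω ∈ B).card : ℝ) := by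
  rw [cntR_def]
  rw [Finset.card_filter]
  push_cast
  apply Finset.sum_congr rfl
  intro k _
  simp [Set.indicator_apply]

/-- lower bound: points of the orbit in `A` give distinct values -/
lemma card_filter_le_image (n : ℕ) (ω : Ω) :
    (((Finset.range (n+1)).filter fun k => T^[k] ω ∈ A T f).card : ℝ)
      ≤ (((Finset.range (n+1)).image fun k => Z T f k ω).card : ℝ) := by
  have hinj : Set.InjOn (fun k => Z T f k ω)
      ((Finset.range (n+1)).filter fun k => T^[k] ω ∈ A T f) := by
    intro k hk l hl hkl
    simp only [Finset.coe_filter, mem_setOf_eq, Finset.mem_range] at hk hl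
    simp only [] at hkl
    by_contra hne
    rcases Nat.lt_or_ge k l with h | h
    · have hc := Z_cocycle T f k l h.le ω
      have h0 : Z T f (l - k) (T^[k] ω) = 0 := by rw [hkl] at hc; linarith
      exact hk.2 (l - k) (by omega) h0
    · have h' : l < k := by omega
      have hc := Z_cocycle T f l k h'.le ω
      have h0 : Z T f (k - l) (T^[l] ω) = 0 := by rw [← hkl] at hc; linarith
      exact hl.2 (k - l) (by omega) h0
  have h1 := Finset.card_image_of_injOn hinj
  have h2 : ((Finset.range (n+1)).filter fun k => T^[k] ω ∈ A T f).image
      (fun k => Z T f k ω) ⊆ (Finset.range (n+1)).image fun k => Z T f k ω :=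
    Finset.image_subset_image (Finset.filter_subset _ _)
  have := Finset.card_le_card h2
  rw [h1] at this
  exact_mod_cast this

/-- upper bound via last visits -/
lemma image_card_le (M n : ℕ) (hMn : M ≤ n) (ω : Ω) :
    (((Finset.range (n+1)).image fun k => Z T f k ω).card : ℝ)
      ≤ (((Finset.range (n+1)).filter fun k => T^[k] ω ∈ AM T f M).card : ℝ) + M := by
  set lastv := (Finset.range (n+1)).filter
    (fun k => ∀ j, k < j → j ≤ n → Z T f j ω ≠ Z T f k ω) with hlastv
  have hsub : (Finset.range (n+1)).image (fun k => Z T f k ω)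
      ⊆ lastv.image (fun k => Z T f k ω) := by
    intro v hv
    obtain ⟨m, hm, hmv⟩ := Finset.mem_image.mp hv
    have hm' : m ≤ n := Nat.lt_succ_iff.mp (Finset.mem_range.mp hm)
    set s' := (Finset.range (n+1)).filter (fun j => Z T f j ω = v) with hs'
    have hne : s'.Nonempty := ⟨m, Finset.mem_filter.mpr ⟨hm, hmv⟩⟩
    set k := s'.max' hne with hk
    have hks : k ∈ s' := Finset.max'_mem s' hne
    have hkr : k ∈ Finset.range (n+1) := (Finset.mem_filter.mp hks).1
    have hkv : Z T f k ω = v := (Finset.mem_filter.mp hks).2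
    apply Finset.mem_image.mpr
    refine ⟨k, ?_, hkv⟩
    rw [hlastv]
    apply Finset.mem_filter.mpr
    refine ⟨hkr, ?_⟩
    intro j hkj hjn hjv
    have hjs : j ∈ s' := Finset.mem_filter.mpr
      ⟨Finset.mem_range.mpr (Nat.lt_succ_iff.mpr hjn), by rw [hjv, hkv]⟩
    have := Finset.le_max' s' j hjs
    omega
  have h1 : ((Finset.range (n+1)).image fun k => Z T f k ω).card ≤ lastv.card :=
    (Finset.card_le_card hsub).trans (Finset.card_image_le)
  have h2 : lastv ⊆ ((Finset.range (n+1)).filter fun k => T^[k] ω ∈ AM T f M)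
      ∪ ((Finset.range (n+1)).filter fun k => n < k + M) := by
    intro k hk
    rw [hlastv, Finset.mem_filter] at hk
    obtain ⟨hkr, hkprop⟩ := hk
    rcases Nat.lt_or_ge n (k + M) with h | h
    · exact Finset.mem_union_right _ (Finset.mem_filter.mpr ⟨hkr, h⟩)
    · apply Finset.mem_union_left
      apply Finset.mem_filter.mpr
      refine ⟨hkr, ?_⟩
      intro j hj1 hjM
      have hc := Z_cocycle T f k (k + j) (Nat.le_add_right _ _) ω
      rw [Nat.add_sub_cancel_left] at hc
      intro h0
      rw [h0, add_zero] at hc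
      exact hkprop (k + j) (by omega) (by omega) hc
  have h3 : ((Finset.range (n+1)).filter fun k => n < k + M).card ≤ M := by
    have hsub2 : ((Finset.range (n+1)).filter fun k => n < k + M)
        ⊆ Finset.Ioc (n - M) n := by
      intro k hk
      rw [Finset.mem_filter, Finset.mem_range] at hk
      rw [Finset.mem_Ioc]
      omega
    have := Finset.card_le_card hsub2
    rw [Nat.card_Ioc] at this
    omega
  have h5 : lastv.card ≤ ((Finset.range (n+1)).filter fun k => T^[k] ω ∈ AM T f M).card
      + ((Finset.range (n+1)).filter fun k => n < k + M).card :=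
    (Finset.card_le_card h2).trans (Finset.card_union_le _ _)
  have : ((Finset.range (n+1)).image fun k => Z T f k ω).card
      ≤ ((Finset.range (n+1)).filter fun k => T^[k] ω ∈ AM T f M).card + M := by omega
  exact_mod_cast this

end Range
namespace Main
theorem range_aux {Ω : Type*} [MeasurableSpace Ω] (μ : Measure Ω) [IsProbabilityMeasure μ]
    (T : Ω → Ω) (hT : Ergodic T μ) (f : Ω → ℤ) (hf : Measurable f) :
    ∀ᵐ ω ∂μ, Tendsto (fun n : ℕ =>
        (((Finset.range (n + 1)).image (fun k => Z T f k ω)).card : ℝ) / n) atTop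
      (𝓝 ((μ (A T f)).toReal)) := by
  have hAmeas := measurable_A hT.measurable hf
  have hAMmeas := measurable_AM hT.measurable hf
  have hμlim : Tendsto (fun M => (μ (AM T f M)).toReal) atTop (𝓝 ((μ (A T f)).toReal)) := by
    have h1 : Tendsto (fun M => μ (AM T f M)) atTop (𝓝 (μ (⋂ M, AM T f M))) := by
      apply tendsto_measure_iInter_atTop
      · exact fun M => (hAMmeas M).nullMeasurableSet
      · intro i j hij ω hω l hl1 hl2
        exact hω l hl1 (hl2.trans hij)
      · exact ⟨0, measure_ne_top μ _⟩
    rw [iInter_AM] at h1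
    exact (ENNReal.tendsto_toReal (measure_ne_top μ _)).comp h1
  have hbA := birkhoff_indicator hT hAmeas
  have hbAM : ∀ᵐ ω ∂μ, ∀ M : ℕ,
      Tendsto (avg T (AM T f M) ω) atTop (𝓝 ((μ (AM T f M)).toReal)) :=
    ae_all_iff.mpr fun M => birkhoff_indicator hT (hAMmeas M)
  filter_upwards [hbA, hbAM] with ω hA hAM'
  set u : ℕ → ℝ :=
    fun n => (((Finset.range (n+1)).image fun k => Z T f k ω).card : ℝ) / n with hu
  set L := (μ (A T f)).toReal with hL
  have hshift : ∀ (B : Set Ω), Tendsto (avg T B ω) atTop (𝓝 ((μ B).toReal)) →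
      Tendsto (fun n : ℕ => cntR T B (n+1) ω / n) atTop (𝓝 ((μ B).toReal)) := by
    intro B hB
    have ha : Tendsto (fun n : ℕ => avg T B ω (n+1)) atTop (𝓝 ((μ B).toReal)) :=
      hB.comp (tendsto_add_atTop_nat 1)
    have hb : Tendsto (fun n : ℕ => ((n:ℝ)+1) / n) atTop (𝓝 1) := by
      have h0 : Tendsto (fun n : ℕ => 1 + 1/(n:ℝ)) atTop (𝓝 (1 + 0)) :=
        tendsto_const_nhds.add tendsto_one_div_atTop_nhds_zero_nat
      rw [add_zero] at h0
      apply Tendsto.congr' _ h0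
      filter_upwards [eventually_ge_atTop 1] with n hn
      have hnpos : (0:ℝ) < n := by exact_mod_cast hn
      field_simp
    have hmul := ha.mul hb
    rw [mul_one] at hmul
    apply hmul.congr'
    filter_upwards [eventually_ge_atTop 1] with n hn
    have hnpos : (0:ℝ) < n := by exact_mod_cast hn
    have hn1 : ((n:ℝ)+1) ≠ 0 := by positivity
    simp only [avg]
    push_cast
    field_simp
  have hu0 : ∀ n, 0 ≤ u n := fun n => div_nonneg (Nat.cast_nonneg _) (Nat.cast_nonneg _)
  have hu2 : ∀ n, u n ≤ 2 := by
    intro n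
    rcases Nat.eq_zero_or_pos n with rfl | hn
    · simp [hu]
    · have hnpos : (0:ℝ) < n := by exact_mod_cast hn
      rw [hu, div_le_iff₀ hnpos]
      have h1 : ((Finset.range (n+1)).image fun k => Z T f k ω).card ≤ n + 1 :=
        (Finset.card_image_le).trans_eq (Finset.card_range _)
      have h2 : (((Finset.range (n+1)).image fun k => Z T f k ω).card : ℝ) ≤ (n:ℝ) + 1 := by
        exact_mod_cast h1
      have h3 : (1:ℝ) ≤ n := by exact_mod_cast hn
      linarith
  have hinf : L ≤ liminf u atTop := by
    have h1 := hshift (A T f) hA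
    have hle : ∀ᶠ n in atTop, cntR T (A T f) (n+1) ω / n ≤ u n := by
      apply Eventually.of_forall
      intro n
      rcases Nat.eq_zero_or_pos n with rfl | hn
      · simp [hu, cntR_eq_card]
      · have hnpos : (0:ℝ) < n := by exact_mod_cast hn
        rw [hu]
        apply div_le_div_of_nonneg_right ?_ hnpos.le
        rw [cntR_eq_card]
        exact card_filter_le_image n ω
    have hw2 : ∀ n : ℕ, cntR T (A T f) (n+1) ω / n ≤ 2 := by
      intro n
      rcases Nat.eq_zero_or_pos n with rfl | hn
      · simp
      · have hnpos : (0:ℝ) < n := by exact_mod_cast hn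
        rw [div_le_iff₀ hnpos]
        have h3 : (1:ℝ) ≤ n := by exact_mod_cast hn
        have := cntR_le T (A T f) (n+1) ω
        push_cast at this
        linarith
    have h2 := liminf_le_liminf hle
      (isBoundedUnder_of ⟨0, fun n => div_nonneg (cntR_nonneg T (A T f) (n+1) ω) (Nat.cast_nonneg n)⟩)
      (isCoboundedUnder_ge_of_eventually_le atTop (Eventually.of_forall hu2))
    rw [h1.liminf_eq] at h2
    exact h2
  have hsup : limsup u atTop ≤ L := by
    have hM : ∀ M : ℕ, limsup u atTop ≤ (μ (AM T f M)).toReal := by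
      intro M
      have h2 : Tendsto (fun n : ℕ => cntR T (AM T f M) (n+1) ω / n + (M:ℝ) / n) atTop
          (𝓝 ((μ (AM T f M)).toReal + 0)) :=
        (hshift _ (hAM' M)).add (tendsto_const_div_atTop_nhds_zero_nat (M:ℝ))
      rw [add_zero] at h2
      have hev : ∀ᶠ n in atTop, u n ≤ cntR T (AM T f M) (n+1) ω / n + (M:ℝ) / n := by
        filter_upwards [eventually_ge_atTop (max M 1)] with n hn
        have hM_le : M ≤ n := le_trans (le_max_left _ _) hn
        have hn1 : 1 ≤ n := le_trans (le_max_right _ _) hn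
        have hnpos : (0:ℝ) < n := by exact_mod_cast hn1
        have h3 := image_card_le (T := T) (f := f) M n hM_le ω
        rw [← cntR_eq_card] at h3
        rw [hu, ← add_div]
        exact div_le_div_of_nonneg_right h3 hnpos.le
      have hcob : IsCoboundedUnder (· ≤ ·) atTop u :=
        isCoboundedUnder_le_of_eventually_le atTop (Eventually.of_forall hu0)
      have := limsup_le_limsup hev hcob h2.isBoundedUnder_le
      rw [h2.limsup_eq] at this
      exact this
    exact ge_of_tendsto hμlim (Eventually.of_forall hM)
  exact tendsto_of_le_liminf_of_limsup_le hinf hsup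
    (isBoundedUnder_of ⟨2, hu2⟩) (isBoundedUnder_of ⟨0, hu0⟩)
end Main
end RangeErgodic

/-- Range theorem for ergodic cocycles (Derriennic's lemma): for the ergodic sums
`Z n = ∑_{k<n} f ∘ T^k` of a measurable integer-valued function `f` over an ergodic
measure-preserving transformation `T` of a probability space, the proportion of distinct
values `R n / n` converges almost surely to `μ(∀ j ≥ 1, Z j ≠ 0)`. -/
theorem range_of_ergodic_cocycle {Ω : Type*} [MeasurableSpace Ω]
    (μ : Measure Ω) [IsProbabilityMeasure μ]
    (T : Ω → Ω) (hT : Ergodic T μ) (f : Ω → ℤ) (hf : Measurable f) :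
    ∀ᵐ ω ∂μ, Tendsto
      (fun n : ℕ =>
        ((((Finset.range (n + 1)).image
          (fun k => ∑ i ∈ Finset.range k, f (T^[i] ω))).card : ℝ)) / (n : ℝ))
      atTop
      (nhds ((μ {ω | ∀ j : ℕ, 1 ≤ j →
        ∑ i ∈ Finset.range j, f (T^[i] ω) ≠ 0}).toReal)) := by
  have := RangeErgodic.Main.range_aux μ T hT f hf
  simpa only [RangeErgodic.Z, RangeErgodic.A] using this
end

section
/- Let (Z_n)_{n≥0} be a sequence of integer-valued random variables with Z_0 = 0 such that for every k ≥ 1 the random vector (Z_k − Z_{k−1}, Z_k − Z_{k−2}, …, Z_k − Z_0) has the same distribution as (Z_1, Z_2, …, Z_k). Let R_n := #{Z_0, Z_1, …, Z_n} and T_0 := inf{n ≥ 1 : Z_n = 0}. Suppose there exist θ ∈ (0,1] and L > 0 such that lim_{n→∞} E[R_n]/n^θ = L. Then lim_{n→∞} n^{1−θ} P(T_0 > n) = θ L. -/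
open MeasureTheory Filter Finset


lemma lim_aux (a : ℕ → ℝ) (θ L : ℝ) (hθ0 : 0 < θ)
    (hS : Tendsto (fun n : ℕ => (∑ k ∈ Finset.range n, a k) / (n:ℝ)^θ) atTop (nhds L))
    (r : ℝ) (hr0 : 0 < r) (hr1 : r ≠ 1) (m : ℕ → ℕ) (hm : Tendsto m atTop atTop)
    (hratio : Tendsto (fun n : ℕ => (m n : ℝ)/(n:ℝ)) atTop (nhds r)) :
    Tendsto (fun n : ℕ => ((∑ k ∈ Finset.range (m n), a k) - ∑ k ∈ Finset.range n, a k)/(n:ℝ)^θ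
      * ((n:ℝ)/((m n:ℝ) - (n:ℝ)))) atTop (nhds (L * ((r^θ - 1)/(r - 1)))) := by
  have h1 : Tendsto (fun n : ℕ => (∑ k ∈ Finset.range (m n), a k) / ((m n : ℕ):ℝ)^θ)
      atTop (nhds L) := hS.comp hm
  have h2 : Tendsto (fun n : ℕ => ((m n : ℝ)/(n:ℝ))^θ) atTop (nhds (r^θ)) :=
    hratio.rpow_const (Or.inl hr0.ne')
  have h3 : Tendsto (fun n : ℕ => ((m n : ℝ)/(n:ℝ) - 1)⁻¹) atTop (nhds ((r-1)⁻¹)) :=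
    (hratio.sub tendsto_const_nhds).inv₀ (sub_ne_zero.2 hr1)
  have hcomb : Tendsto (fun n : ℕ =>
      ((∑ k ∈ Finset.range (m n), a k) / ((m n:ℕ):ℝ)^θ * ((m n : ℝ)/(n:ℝ))^θ
        - (∑ k ∈ Finset.range n, a k) / (n:ℝ)^θ) * ((m n : ℝ)/(n:ℝ) - 1)⁻¹)
      atTop (nhds ((L * r^θ - L) * (r-1)⁻¹)) := ((h1.mul h2).sub hS).mul h3
  have heq : (L * r^θ - L) * (r-1)⁻¹ = L * ((r^θ - 1)/(r - 1)) := by ring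
  rw [heq] at hcomb
  refine hcomb.congr' ?_
  filter_upwards [eventually_ge_atTop 1, hm.eventually_ge_atTop 1] with n hn hmn
  have hn0 : (0:ℝ) < n := by exact_mod_cast hn
  have hmn0 : (0:ℝ) < m n := by exact_mod_cast hmn
  have hmθ : ((m n : ℝ))^θ ≠ 0 := (Real.rpow_pos_of_pos hmn0 θ).ne'
  rw [Real.div_rpow hmn0.le hn0.le, div_mul_div_comm,
    mul_comm (∑ k ∈ Finset.range (m n), a k) _, mul_div_mul_left _ _ hmθ, ← sub_div,
    show (m n : ℝ)/(n:ℝ) - 1 = ((m n : ℝ) - n)/(n:ℝ) by field_simp, inv_div]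

lemma tauberian_mono (a : ℕ → ℝ) (hanti : Antitone a) (hnn : ∀ n, 0 ≤ a n)
    (θ L : ℝ) (hθ0 : 0 < θ) (hθ1 : θ ≤ 1) (hL : 0 < L)
    (hS : Tendsto (fun n : ℕ => (∑ k ∈ Finset.range n, a k) / (n:ℝ)^θ) atTop (nhds L)) :
    Tendsto (fun n : ℕ => (n:ℝ)^(1-θ) * a n) atTop (nhds (θ*L)) := by
  have hslope : Tendsto (slope (fun x : ℝ => x^θ) 1) (nhdsWithin 1 {(1:ℝ)}ᶜ) (nhds θ) := by
    have h := hasDerivAt_iff_tendsto_slope.mp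
      (Real.hasDerivAt_rpow_const (x := 1) (p := θ) (Or.inl one_ne_zero))
    simpa using h
  rw [Metric.tendsto_nhds]
  intro ε hε
  have hεL : 0 < ε / L := div_pos hε hL
  -- choose c > 1 with |slope c - θ| < ε/L
  have hev : ∀ᶠ x in nhdsWithin 1 {(1:ℝ)}ᶜ, |slope (fun x : ℝ => x^θ) 1 x - θ| < ε / L := by
    have := hslope.eventually (Metric.ball_mem_nhds θ hεL)
    simpa [Real.dist_eq] using this
  obtain ⟨c, hcs, hc1⟩ : ∃ c, |slope (fun x : ℝ => x^θ) 1 c - θ| < ε / L ∧ 1 < c := by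
    have h2 : ∀ᶠ x in nhdsWithin (1:ℝ) (Set.Ioi 1),
        |slope (fun x : ℝ => x^θ) 1 x - θ| < ε / L ∧ 1 < x :=
      ((hev.filter_mono (nhdsWithin_mono 1 (fun x hx => ne_of_gt hx))).and
        self_mem_nhdsWithin)
    exact h2.exists
  obtain ⟨d, hds, hd0, hd1⟩ : ∃ d, |slope (fun x : ℝ => x^θ) 1 d - θ| < ε / L ∧ 0 < d ∧ d < 1 := by
    have h2 : ∀ᶠ x in nhdsWithin (1:ℝ) (Set.Iio 1),
        (|slope (fun x : ℝ => x^θ) 1 x - θ| < ε / L ∧ x ∈ Set.Ioo (0:ℝ) 1) :=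
      ((hev.filter_mono (nhdsWithin_mono 1 (fun x hx => ne_of_lt hx))).and
        (Ioo_mem_nhdsLT (by norm_num)))
    obtain ⟨d, hd, hd2⟩ := h2.exists
    exact ⟨d, hd, hd2.1, hd2.2⟩
  have hslc : slope (fun x : ℝ => x^θ) 1 c = (c^θ - 1)/(c - 1) := by
    simp [slope_def_field, div_eq_div_iff]
  have hsld : slope (fun x : ℝ => x^θ) 1 d = (d^θ - 1)/(d - 1) := by
    simp [slope_def_field, div_eq_div_iff]
  rw [hslc] at hcs
  rw [hsld] at hds
  -- translate into bounds on L * slope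
  have hLc : θ * L - ε < L * ((c^θ - 1)/(c - 1)) := by
    have h := (abs_sub_lt_iff.mp hcs).2
    have : θ - ε / L < (c^θ - 1)/(c - 1) := by linarith
    have h2 := mul_lt_mul_of_pos_left this hL
    rw [mul_sub] at h2
    rw [mul_div_cancel₀ _ hL.ne'] at h2
    linarith
  have hLd : L * ((d^θ - 1)/(d - 1)) < θ * L + ε := by
    have h := (abs_sub_lt_iff.mp hds).1
    have : (d^θ - 1)/(d - 1) < θ + ε / L := by linarith
    have h2 := mul_lt_mul_of_pos_left this hL
    rw [mul_add] at h2
    rw [mul_div_cancel₀ _ hL.ne'] at h2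
    linarith
  -- the two comparison sequences
  set mc : ℕ → ℕ := fun n => ⌈c * n⌉₊ with hmc
  set md : ℕ → ℕ := fun n => ⌊d * n⌋₊ with hmd
  have hmcat : Tendsto mc atTop atTop := by
    apply tendsto_atTop_mono (fun n => ?_) tendsto_id
    calc (n : ℕ) = ⌈(n:ℝ)⌉₊ := by simp
    _ ≤ ⌈c * n⌉₊ := Nat.ceil_le_ceil (by nlinarith [Nat.cast_nonneg (α := ℝ) n])
  have hmdat : Tendsto md atTop atTop := by
    refine tendsto_nat_floor_atTop.comp ?_
    exact (tendsto_natCast_atTop_atTop (R := ℝ)).const_mul_atTop hd0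
  have hmcr : Tendsto (fun n : ℕ => (mc n : ℝ)/(n:ℝ)) atTop (nhds c) := by
    have hub : ∀ᶠ n : ℕ in atTop, (mc n : ℝ)/(n:ℝ) ≤ c + 1/n := by
      filter_upwards [eventually_ge_atTop 1] with n hn
      have hn0 : (0:ℝ) < n := by exact_mod_cast hn
      rw [div_le_iff₀ hn0, add_mul, div_mul_cancel₀ _ hn0.ne']
      have := (Nat.ceil_lt_add_one (by positivity : (0:ℝ) ≤ c * n)).le
      linarith
    have hlb : ∀ᶠ n : ℕ in atTop, c ≤ (mc n : ℝ)/(n:ℝ) := by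
      filter_upwards [eventually_ge_atTop 1] with n hn
      have hn0 : (0:ℝ) < n := by exact_mod_cast hn
      rw [le_div_iff₀ hn0]
      exact Nat.le_ceil _
    have hlim2 : Tendsto (fun n : ℕ => c + 1/(n:ℝ)) atTop (nhds c) := by
      simpa using (tendsto_const_nhds (x := c) (f := atTop (α := ℕ))).add
        tendsto_one_div_atTop_nhds_zero_nat
    exact tendsto_of_tendsto_of_tendsto_of_le_of_le' tendsto_const_nhds hlim2 hlb hub
  have hmdr : Tendsto (fun n : ℕ => (md n : ℝ)/(n:ℝ)) atTop (nhds d) := by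
    have hub : ∀ᶠ n : ℕ in atTop, (md n : ℝ)/(n:ℝ) ≤ d := by
      filter_upwards [eventually_ge_atTop 1] with n hn
      have hn0 : (0:ℝ) < n := by exact_mod_cast hn
      rw [div_le_iff₀ hn0]
      exact Nat.floor_le (by positivity)
    have hlb : ∀ᶠ n : ℕ in atTop, d - 1/n ≤ (md n : ℝ)/(n:ℝ) := by
      filter_upwards [eventually_ge_atTop 1] with n hn
      have hn0 : (0:ℝ) < n := by exact_mod_cast hn
      rw [sub_le_iff_le_add, ← add_div, le_div_iff₀ hn0]
      nlinarith [(Nat.lt_floor_add_one (d * (n:ℝ))).le]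
    have hlim2 : Tendsto (fun n : ℕ => d - 1/(n:ℝ)) atTop (nhds d) := by
      simpa using (tendsto_const_nhds (x := d) (f := atTop (α := ℕ))).sub
        tendsto_one_div_atTop_nhds_zero_nat
    exact tendsto_of_tendsto_of_tendsto_of_le_of_le' hlim2 tendsto_const_nhds hlb hub
  have hgc := lim_aux a θ L hθ0 hS c (lt_trans one_pos hc1) (ne_of_gt hc1) mc hmcat hmcr
  have hgd := lim_aux a θ L hθ0 hS d hd0 (ne_of_lt hd1) md hmdat hmdr
  have hev1 : ∀ᶠ n : ℕ in atTop,
      ((∑ k ∈ Finset.range (mc n), a k) - ∑ k ∈ Finset.range n, a k)/(n:ℝ)^θ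
        * ((n:ℝ)/((mc n:ℝ) - (n:ℝ))) ≤ (n:ℝ)^(1-θ) * a n := by
    filter_upwards [eventually_ge_atTop 1, hmcr.eventually_const_lt hc1] with n hn hlt
    have hn0 : (0:ℝ) < n := by exact_mod_cast hn
    have hnm : n < mc n := by
      by_contra h
      push_neg at h
      have : (mc n : ℝ) / n ≤ 1 := by
        rw [div_le_one hn0]; exact_mod_cast h
      linarith
    have hpos : (0:ℝ) < (mc n : ℝ) - n := by
      have : (n:ℝ) < mc n := by exact_mod_cast hnm
      linarith
    have hsum : (∑ k ∈ Finset.range (mc n), a k) - ∑ k ∈ Finset.range n, a k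
        = ∑ k ∈ Finset.Ico n (mc n), a k := (Finset.sum_Ico_eq_sub a hnm.le).symm
    have h1 : (∑ k ∈ Finset.range (mc n), a k) - ∑ k ∈ Finset.range n, a k
        ≤ ((mc n:ℝ) - n) * a n := by
      rw [hsum]
      have := Finset.sum_le_card_nsmul (Finset.Ico n (mc n)) a (a n)
        (fun k hk => hanti (Finset.mem_Ico.mp hk).1)
      rw [Nat.card_Ico, nsmul_eq_mul] at this
      rwa [Nat.cast_sub hnm.le] at this
    have hθn : ((n:ℝ))^θ ≠ 0 := (Real.rpow_pos_of_pos hn0 θ).ne'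
    calc ((∑ k ∈ Finset.range (mc n), a k) - ∑ k ∈ Finset.range n, a k)/(n:ℝ)^θ
          * ((n:ℝ)/((mc n:ℝ) - (n:ℝ)))
        = ((∑ k ∈ Finset.range (mc n), a k) - ∑ k ∈ Finset.range n, a k)
          * ((n:ℝ)/(((mc n:ℝ) - n) * (n:ℝ)^θ)) := by
          rw [div_mul_div_comm, mul_comm ((n:ℝ)^θ) ((mc n:ℝ) - (n:ℝ)), mul_div_assoc]
      _ ≤ (((mc n:ℝ) - n) * a n) * ((n:ℝ)/(((mc n:ℝ) - n) * (n:ℝ)^θ)) :=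
          mul_le_mul_of_nonneg_right h1 (by positivity)
      _ = (n:ℝ)^(1-θ) * a n := by
          rw [Real.rpow_sub hn0, Real.rpow_one]
          field_simp [hpos.ne']
  have hev2 : ∀ᶠ n : ℕ in atTop, (n:ℝ)^(1-θ) * a n ≤
      ((∑ k ∈ Finset.range (md n), a k) - ∑ k ∈ Finset.range n, a k)/(n:ℝ)^θ
        * ((n:ℝ)/((md n:ℝ) - (n:ℝ))) := by
    filter_upwards [eventually_ge_atTop 1, hmdr.eventually_lt_const hd1] with n hn hlt
    have hn0 : (0:ℝ) < n := by exact_mod_cast hn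
    have hnm : md n < n := by
      by_contra h
      push_neg at h
      have : (1:ℝ) ≤ (md n : ℝ) / n := by
        rw [le_div_iff₀ hn0]
        have : (n:ℝ) ≤ md n := by exact_mod_cast h
        linarith
      linarith
    have hpos : (0:ℝ) < (n:ℝ) - md n := by
      have : (md n:ℝ) < n := by exact_mod_cast hnm
      linarith
    have hsum : (∑ k ∈ Finset.range n, a k) - ∑ k ∈ Finset.range (md n), a k
        = ∑ k ∈ Finset.Ico (md n) n, a k := (Finset.sum_Ico_eq_sub a hnm.le).symm
    have h1 : ((n:ℝ) - md n) * a n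
        ≤ (∑ k ∈ Finset.range n, a k) - ∑ k ∈ Finset.range (md n), a k := by
      rw [hsum]
      have := Finset.card_nsmul_le_sum (Finset.Ico (md n) n) a (a n)
        (fun k hk => hanti (Finset.mem_Ico.mp hk).2.le)
      rw [Nat.card_Ico, nsmul_eq_mul] at this
      rwa [Nat.cast_sub hnm.le] at this
    have hθn : ((n:ℝ))^θ ≠ 0 := (Real.rpow_pos_of_pos hn0 θ).ne'
    calc (n:ℝ)^(1-θ) * a n
        = (((n:ℝ) - md n) * a n) * ((n:ℝ)/(((n:ℝ) - md n) * (n:ℝ)^θ)) := by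
          rw [Real.rpow_sub hn0, Real.rpow_one]
          field_simp [hpos.ne']
      _ ≤ ((∑ k ∈ Finset.range n, a k) - ∑ k ∈ Finset.range (md n), a k)
          * ((n:ℝ)/(((n:ℝ) - md n) * (n:ℝ)^θ)) :=
          mul_le_mul_of_nonneg_right h1 (by positivity)
      _ = ((∑ k ∈ Finset.range (md n), a k) - ∑ k ∈ Finset.range n, a k)/(n:ℝ)^θ
          * ((n:ℝ)/((md n:ℝ) - (n:ℝ))) := by
          have hne2 : (md n:ℝ) - (n:ℝ) ≠ 0 := by
            intro h
            rw [sub_eq_zero] at h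
            rw [h] at hpos
            simp at hpos
          field_simp [hpos.ne', hne2]
          ring
  have e1 := hgc.eventually_const_lt hLc
  have e2 := hgd.eventually_lt_const hLd
  filter_upwards [e1, e2, hev1, hev2] with n h1 h2 h3 h4
  rw [Real.dist_eq, abs_sub_lt_iff]
  constructor <;> linarith


lemma card_image_eq_sum_new (f : ℕ → ℤ) (n : ℕ) :
    ((Finset.range n).image f).card
      = ∑ k ∈ Finset.range n, (if ∀ j < k, f k ≠ f j then 1 else 0) := by
  induction n with
  | zero => simp
  | succ n ih =>
    rw [Finset.range_add_one, Finset.image_insert, Finset.sum_insert Finset.notMem_range_self, ← ih]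
    by_cases h : ∀ j < n, f n ≠ f j
    · rw [Finset.card_insert_of_notMem, if_pos h, add_comm]
      rw [Finset.mem_image]
      rintro ⟨j, hj, hfj⟩
      exact h j (Finset.mem_range.mp hj) hfj.symm
    · rw [if_neg h, zero_add]
      push_neg at h
      obtain ⟨j, hj, hfj⟩ := h
      rw [Finset.insert_eq_self.mpr]
      exact Finset.mem_image.mpr ⟨j, Finset.mem_range.mpr hj, hfj.symm⟩

section Main
variable {Ω : Type*} [MeasurableSpace Ω]

lemma new_eq_avoid (P : Measure Ω) [IsProbabilityMeasure P]
    (Z : ℕ → Ω → ℤ) (hZmeas : ∀ n, Measurable (Z n))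
    (hstat : ∀ k : ℕ, 1 ≤ k →
      Measure.map (fun ω => fun i : Fin k => Z k ω - Z (k - 1 - (i : ℕ)) ω) P =
        Measure.map (fun ω => fun i : Fin k => Z ((i : ℕ) + 1) ω) P)
    (k : ℕ) (hk : 1 ≤ k) :
    P {ω | ∀ j < k, Z k ω ≠ Z j ω} = P {ω | ∀ m, 1 ≤ m → m ≤ k → Z m ω ≠ 0} := by
  set S : Set (Fin k → ℤ) := ⋂ i : Fin k, (fun v : Fin k → ℤ => v i) ⁻¹' ({0}ᶜ) with hS
  have hSmeas : MeasurableSet S :=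
    MeasurableSet.iInter fun i => (measurable_pi_apply i) (measurableSet_singleton 0).compl
  have hf1 : Measurable (fun ω => fun i : Fin k => Z k ω - Z (k - 1 - (i : ℕ)) ω) :=
    measurable_pi_lambda _ fun i => (hZmeas k).sub (hZmeas _)
  have hf2 : Measurable (fun ω => fun i : Fin k => Z ((i : ℕ) + 1) ω) :=
    measurable_pi_lambda _ fun i => hZmeas _
  have e1 : {ω | ∀ j < k, Z k ω ≠ Z j ω}
      = (fun ω => fun i : Fin k => Z k ω - Z (k - 1 - (i : ℕ)) ω) ⁻¹' S := by
    ext ω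
    simp only [Set.mem_setOf_eq, hS, Set.mem_preimage, Set.mem_iInter, Set.mem_compl_iff,
      Set.mem_singleton_iff]
    constructor
    · intro h i
      exact sub_ne_zero.mpr (h (k - 1 - (i : ℕ)) (by omega))
    · intro h j hj
      have := h ⟨k - 1 - j, by omega⟩
      simp only at this
      rw [show k - 1 - (k - 1 - j) = j by omega] at this
      exact sub_ne_zero.mp this
  have e2 : {ω | ∀ m, 1 ≤ m → m ≤ k → Z m ω ≠ 0}
      = (fun ω => fun i : Fin k => Z ((i : ℕ) + 1) ω) ⁻¹' S := by
    ext ω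
    simp only [Set.mem_setOf_eq, hS, Set.mem_preimage, Set.mem_iInter, Set.mem_compl_iff,
      Set.mem_singleton_iff]
    constructor
    · intro h i
      exact h ((i : ℕ) + 1) (by omega) (by omega)
    · intro h m h1 hm
      have := h ⟨m - 1, by omega⟩
      simpa [show m - 1 + 1 = m by omega] using this
  rw [e1, e2, ← Measure.map_apply hf1 hSmeas, ← Measure.map_apply hf2 hSmeas, hstat k hk]

lemma avoid_set_measurable (Z : ℕ → Ω → ℤ) (hZmeas : ∀ n, Measurable (Z n)) (k : ℕ) :
    MeasurableSet {ω | ∀ m, 1 ≤ m → m ≤ k → Z m ω ≠ 0} := by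
  have : {ω | ∀ m, 1 ≤ m → m ≤ k → Z m ω ≠ 0}
      = ⋂ m ∈ Finset.Icc 1 k, (Z m) ⁻¹' ({0}ᶜ) := by
    ext ω
    simp [Finset.mem_Icc, and_imp]
  rw [this]
  exact MeasurableSet.biInter (Set.to_countable _)
    fun m _ => (hZmeas m) (measurableSet_singleton 0).compl

lemma new_set_measurable (Z : ℕ → Ω → ℤ) (hZmeas : ∀ n, Measurable (Z n)) (k : ℕ) :
    MeasurableSet {ω | ∀ j < k, Z k ω ≠ Z j ω} := by
  have : {ω | ∀ j < k, Z k ω ≠ Z j ω}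
      = ⋂ j ∈ Finset.range k, {ω | Z k ω - Z j ω ≠ 0} := by
    ext ω
    simp [sub_ne_zero]
  rw [this]
  exact MeasurableSet.biInter (Set.to_countable _)
    fun j _ => ((hZmeas k).sub (hZmeas j)) (measurableSet_singleton 0).compl

lemma integral_range_card (P : Measure Ω) [IsProbabilityMeasure P]
    (Z : ℕ → Ω → ℤ) (hZmeas : ∀ n, Measurable (Z n)) (n : ℕ) :
    ∫ ω, (((Finset.range (n + 1)).image (fun k => Z k ω)).card : ℝ) ∂P
      = ∑ k ∈ Finset.range (n + 1), (P {ω | ∀ j < k, Z k ω ≠ Z j ω}).toReal := by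
  have hrw : ∀ ω : Ω, (((Finset.range (n + 1)).image (fun k => Z k ω)).card : ℝ)
      = ∑ k ∈ Finset.range (n + 1),
          ({ω' | ∀ j < k, Z k ω' ≠ Z j ω'}).indicator (fun _ => (1:ℝ)) ω := by
    intro ω
    rw [card_image_eq_sum_new (fun k => Z k ω) (n + 1)]
    push_cast
    refine Finset.sum_congr rfl fun k _ => ?_
    simp [Set.indicator_apply, Set.mem_setOf_eq]
  simp_rw [hrw]
  rw [integral_finset_sum]
  · refine Finset.sum_congr rfl fun k _ => ?_
    exact integral_indicator_one (new_set_measurable Z hZmeas k)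
  · intro k _
    exact (integrable_const (1:ℝ)).indicator (new_set_measurable Z hZmeas k)

end Main

/-- From mean-range asymptotics to return-time tail asymptotics: if `Z` is an integer-valued
sequence with `Z 0 = 0` whose backward increment vectors `(Z k − Z (k−1), …, Z k − Z 0)` have
the same law as `(Z 1, …, Z k)`, `R n = #{Z 0, …, Z n}`, `T₀` is the first return time to `0`,
and `E[R n]/n^θ → L` for some `θ ∈ (0,1]`, `L > 0`, then `n^{1−θ} P(T₀ > n) → θ L`. -/
theorem tail_return_time_asymptotics {Ω : Type*} [MeasurableSpace Ω]
    (P : Measure Ω) [IsProbabilityMeasure P]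
    (Z : ℕ → Ω → ℤ) (hZmeas : ∀ n, Measurable (Z n)) (hZ0 : ∀ ω, Z 0 ω = 0)
    (hstat : ∀ k : ℕ, 1 ≤ k →
      Measure.map (fun ω => fun i : Fin k => Z k ω - Z (k - 1 - (i : ℕ)) ω) P =
        Measure.map (fun ω => fun i : Fin k => Z ((i : ℕ) + 1) ω) P)
    (T0 : Ω → ℕ∞)
    (hT0 : ∀ ω, T0 ω = sInf {t : ℕ∞ | ∃ m : ℕ, (m : ℕ∞) = t ∧ 1 ≤ m ∧ Z m ω = 0})
    (θ L : ℝ) (hθ0 : 0 < θ) (hθ1 : θ ≤ 1) (hL : 0 < L)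
    (hlim : Tendsto (fun n : ℕ =>
      (∫ ω, (((Finset.range (n + 1)).image (fun k => Z k ω)).card : ℝ) ∂P) / (n : ℝ) ^ θ)
      atTop (nhds L)) :
    Tendsto (fun n : ℕ => (n : ℝ) ^ (1 - θ) * (P {ω | (n : ℕ∞) < T0 ω}).toReal)
      atTop (nhds (θ * L)) := by
  set A : ℕ → Set Ω := fun k => {ω | ∀ m, 1 ≤ m → m ≤ k → Z m ω ≠ 0} with hA
  set a : ℕ → ℝ := fun k => (P (A k)).toReal with ha
  have hNk : ∀ k, (P {ω | ∀ j < k, Z k ω ≠ Z j ω}).toReal = a k := by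
    intro k
    rcases Nat.eq_zero_or_pos k with hk | hk
    · subst hk
      have h1 : {ω : Ω | ∀ j < 0, Z 0 ω ≠ Z j ω} = Set.univ := by
        ext ω; simp
      have h2 : A 0 = Set.univ := by
        ext ω
        simp only [hA, Set.mem_setOf_eq, Set.mem_univ, iff_true]
        intro m h1 h2
        omega
      rw [ha]
      simp only [h1, h2]
    · rw [ha]
      simp only
      rw [new_eq_avoid P Z hZmeas hstat k hk]
  have hint : ∀ n : ℕ,
      ∫ ω, (((Finset.range (n + 1)).image (fun k => Z k ω)).card : ℝ) ∂P
        = ∑ k ∈ Finset.range (n + 1), a k := by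
    intro n
    rw [integral_range_card P Z hZmeas n]
    exact Finset.sum_congr rfl fun k _ => hNk k
  have hanti : Antitone a := by
    refine antitone_nat_of_succ_le fun k => ?_
    refine ENNReal.toReal_mono (measure_ne_top P _) (measure_mono fun ω h m h1 hm => ?_)
    exact h m h1 (hm.trans (Nat.le_succ k))
  have hnn : ∀ n, 0 ≤ a n := fun n => ENNReal.toReal_nonneg
  have hlim1 : Tendsto (fun n : ℕ => (∑ k ∈ Finset.range (n+1), a k)/(n:ℝ)^θ)
      atTop (nhds L) := hlim.congr fun n => by rw [hint n]
  have hratio : Tendsto (fun n : ℕ => ((n:ℝ)/((n:ℝ)+1))^θ) atTop (nhds 1) := by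
    have h0 : Tendsto (fun n : ℕ => (n:ℝ)/((n:ℝ)+1)) atTop (nhds 1) :=
      tendsto_natCast_div_add_atTop 1
    simpa using h0.rpow_const (Or.inr hθ0.le)
  have hS : Tendsto (fun n : ℕ => (∑ k ∈ Finset.range n, a k)/(n:ℝ)^θ) atTop (nhds L) := by
    rw [← tendsto_add_atTop_iff_nat 1]
    have hmul := hlim1.mul hratio
    rw [mul_one] at hmul
    refine hmul.congr' ?_
    filter_upwards [eventually_ge_atTop 1] with n hn
    have hn0 : (0:ℝ) < n := by exact_mod_cast hn
    have hθn : ((n:ℝ))^θ ≠ 0 := (Real.rpow_pos_of_pos hn0 θ).ne'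
    rw [Real.div_rpow hn0.le (by positivity), div_mul_div_comm,
      mul_comm (∑ k ∈ Finset.range (n+1), a k) _, mul_div_mul_left _ _ hθn]
    push_cast
    ring_nf
  have htaub := tauberian_mono a hanti hnn θ L hθ0 hθ1 hL hS
  have hset : ∀ n : ℕ, {ω | (n:ℕ∞) < T0 ω} = A n := by
    intro n
    ext ω
    simp only [Set.mem_setOf_eq, hA]
    rw [hT0 ω]
    constructor
    · intro h m h1 hm hZ
      have hmem : (m:ℕ∞) ∈ {t : ℕ∞ | ∃ m' : ℕ, (m':ℕ∞) = t ∧ 1 ≤ m' ∧ Z m' ω = 0} :=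
        ⟨m, rfl, h1, hZ⟩
      have h2 : (n:ℕ∞) < (m:ℕ∞) := lt_of_lt_of_le h (sInf_le hmem)
      have h3 : n < m := by exact_mod_cast h2
      omega
    · intro h
      have h1 : ((n+1:ℕ):ℕ∞) ≤ sInf {t : ℕ∞ | ∃ m : ℕ, (m:ℕ∞) = t ∧ 1 ≤ m ∧ Z m ω = 0} := by
        refine le_sInf ?_
        rintro t ⟨m, rfl, hm1, hmZ⟩
        have h2 : n < m := by
          by_contra hc
          push_neg at hc
          exact h m hm1 hc hmZ
        exact_mod_cast h2
      calc (n:ℕ∞) < ((n+1:ℕ):ℕ∞) := by exact_mod_cast n.lt_succ_self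
        _ ≤ _ := h1
  refine htaub.congr fun n => ?_
  rw [hset n]
end
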